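/- arXiv:2110.01052 — 3 statements merged into one kernel-verified Lean document; each statement's English description precedes it below -/
import Mathlib

section
/- Let L_1, ..., L_n be i.i.d. random variables taking values in [0,1] with mean R = E[L_1], and let R̂ = (1/n)∑_{i=1}^n L_i. Fix α ∈ (0,1) and define h1(a,b) = a·log(a/b) + (1−a)·log((1−a)/(1−b)) (with the convention 0·log 0 = 0), and define the hybridized Hoeffding–Bentkus p-value p^HB = min( exp{−n·h1(min(R̂, α), α)}, e · P(Bin(n, α) ≤ ⌈n·R̂⌉) ), where Bin(n, α) denotes a Binomial random variable with n trials and success probability α. If R > α, then for every u ∈ [0,1], P(p^HB ≤ u) ≤ u. -/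
open MeasureTheory ProbabilityTheory

/-- The function `h1(a,b) = a log(a/b) + (1-a) log((1-a)/(1-b))` (relative entropy of
Bernoulli(a) with respect to Bernoulli(b)); `Real.log 0 = 0` gives the `0 log 0 = 0`
convention. -/
noncomputable def h1 (a b : ℝ) : ℝ :=
  a * Real.log (a / b) + (1 - a) * Real.log ((1 - a) / (1 - b))

/-- The binomial CDF: `P(Bin(n, p) ≤ k)` for an integer threshold `k`. -/
noncomputable def binomCDF (n : ℕ) (p : ℝ) (k : ℤ) : ℝ :=
  ∑ j ∈ Finset.range (n + 1),
    if (j : ℤ) ≤ k then (n.choose j : ℝ) * p ^ j * (1 - p) ^ (n - j) else 0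

namespace HB
open Finset

noncomputable def pmf (n : ℕ) (α : ℝ) (j : ℕ) : ℝ :=
  (n.choose j : ℝ) * α ^ j * (1 - α) ^ (n - j)

noncomputable def Fn (n : ℕ) (α : ℝ) (k : ℕ) : ℝ :=
  ∑ j ∈ Finset.range (n + 1), if j ≤ k then pmf n α j else 0

variable {n : ℕ} {α : ℝ}

lemma pmf_nonneg (h0 : 0 < α) (h1 : α < 1) (j : ℕ) : 0 ≤ pmf n α j := by
  unfold pmf
  have : (0:ℝ) ≤ 1 - α := by linarith
  positivity

lemma pmf_pos (h0 : 0 < α) (h1 : α < 1) {j : ℕ} (hj : j ≤ n) : 0 < pmf n α j := by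
  unfold pmf
  have h2 : (0:ℝ) < 1 - α := by linarith
  have h3 : 0 < n.choose j := Nat.choose_pos hj
  have h4 : (0:ℝ) < (n.choose j : ℝ) := by exact_mod_cast h3
  positivity

lemma Fn_eq (h0 : 0 < α) (h1 : α < 1) {k : ℕ} (hk : k ≤ n) :
    Fn n α k = ∑ j ∈ Finset.range (k + 1), pmf n α j := by
  unfold Fn
  rw [← Finset.sum_filter]
  apply Finset.sum_congr
  · ext j; simp only [Finset.mem_filter, Finset.mem_range]; omega
  · intros; rfl

lemma Fn_stable (h0 : 0 < α) (h1 : α < 1) {k : ℕ} (hk : n ≤ k) :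
    Fn n α k = Fn n α n := by
  unfold Fn
  apply Finset.sum_congr rfl
  intro j hj
  simp only [Finset.mem_range] at hj
  have : j ≤ k := by omega
  have : j ≤ n := by omega
  simp_all

lemma Fn_pos (h0 : 0 < α) (h1 : α < 1) (k : ℕ) : 0 < Fn n α k := by
  unfold Fn
  apply Finset.sum_pos'
  · intro j hj
    by_cases h : j ≤ k <;> simp [h, pmf_nonneg h0 h1]
  · exact ⟨0, by simp, by simp [pmf_pos h0 h1 (Nat.zero_le n)]⟩

lemma Fn_mono (h0 : 0 < α) (h1 : α < 1) : Monotone (Fn n α) := by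
  intro a b hab
  unfold Fn
  apply Finset.sum_le_sum
  intro j hj
  by_cases h : j ≤ a
  · simp [h, le_trans h hab]
  · by_cases h' : j ≤ b <;> simp [h, h', pmf_nonneg h0 h1]

lemma Fn_succ (h0 : 0 < α) (h1 : α < 1) {k : ℕ} (hk : k < n) :
    Fn n α (k + 1) = Fn n α k + pmf n α (k + 1) := by
  rw [Fn_eq h0 h1 (by omega), Fn_eq h0 h1 (by omega), Finset.sum_range_succ]

lemma Fn_top (h0 : 0 < α) (h1 : α < 1) : Fn n α n = 1 := by
  rw [Fn_eq h0 h1 le_rfl]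
  have h := add_pow α (1 - α) n
  have h2 : α + (1 - α) = 1 := by ring
  rw [h2, one_pow] at h
  calc ∑ j ∈ Finset.range (n + 1), pmf n α j
      = ∑ j ∈ Finset.range (n + 1), α ^ j * (1 - α) ^ (n - j) * (n.choose j : ℝ) := by
        apply Finset.sum_congr rfl; intro j hj; unfold pmf; ring
    _ = 1 := h.symm

lemma choose_ineq {i y : ℕ} (hiy : i ≤ y) (hyn : y + 2 ≤ n) :
    n.choose i * n.choose (y + 2) ≤ n.choose (i + 1) * n.choose (y + 1) := by
  have h3 : n.choose (i + 1) * (i + 1) = n.choose i * (n - i) :=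
    Nat.choose_succ_right_eq n i
  have h4 : n.choose (y + 2) * (y + 2) = n.choose (y + 1) * (n - (y + 1)) :=
    Nat.choose_succ_right_eq n (y + 1)
  have hpos : 0 < (i + 1) * (y + 2) := by positivity
  apply Nat.le_of_mul_le_mul_right _ hpos
  calc n.choose i * n.choose (y + 2) * ((i + 1) * (y + 2))
      = (n.choose i * (i+1)) * (n.choose (y + 2) * (y + 2)) := by ring
    _ = (n.choose i * (i+1)) * (n.choose (y + 1) * (n - (y + 1))) := by rw [h4]
    _ = (n.choose i * n.choose (y + 1)) * ((i + 1) * (n - (y + 1))) := by ring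
    _ ≤ (n.choose i * n.choose (y + 1)) * ((i + 1) * (n - i)) := by
        apply Nat.mul_le_mul_left
        exact Nat.mul_le_mul_left _ (by omega)
    _ ≤ (n.choose i * n.choose (y + 1)) * ((y + 2) * (n - i)) := by
        apply Nat.mul_le_mul_left
        exact Nat.mul_le_mul_right _ (by omega)
    _ = (n.choose i * (n - i)) * (n.choose (y + 1) * (y + 2)) := by ring
    _ = (n.choose (i + 1) * (i + 1)) * (n.choose (y + 1) * (y + 2)) := by rw [h3]
    _ = n.choose (i + 1) * n.choose (y + 1) * ((i + 1) * (y + 2)) := by ring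

lemma pmf_lc (h0 : 0 < α) (h1 : α < 1) {i y : ℕ} (hiy : i ≤ y) (hyn : y + 2 ≤ n) :
    pmf n α i * pmf n α (y + 2) ≤ pmf n α (i + 1) * pmf n α (y + 1) := by
  have hα1 : (0:ℝ) ≤ 1 - α := by linarith
  have hexp : n - i + (n - (y + 2)) = n - (i + 1) + (n - (y + 1)) := by omega
  have hexp2 : i + (y + 2) = (i + 1) + (y + 1) := by omega
  have key : ((n.choose i * n.choose (y + 2) : ℕ) : ℝ) ≤
      ((n.choose (i + 1) * n.choose (y + 1) : ℕ) : ℝ) :=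
    Nat.cast_le.mpr (choose_ineq hiy hyn)
  have lhs_eq : pmf n α i * pmf n α (y + 2) =
      ((n.choose i * n.choose (y + 2) : ℕ) : ℝ) *
        (α ^ (i + (y + 2)) * (1 - α) ^ (n - i + (n - (y + 2)))) := by
    unfold pmf; push_cast; rw [pow_add, pow_add]; ring
  have rhs_eq : pmf n α (i + 1) * pmf n α (y + 1) =
      ((n.choose (i + 1) * n.choose (y + 1) : ℕ) : ℝ) *
        (α ^ (i + (y + 2)) * (1 - α) ^ (n - i + (n - (y + 2)))) := by
    unfold pmf; push_cast; rw [hexp, hexp2, pow_add, pow_add]; ring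
  rw [lhs_eq, rhs_eq]
  apply mul_le_mul_of_nonneg_right key
  positivity

lemma Fn_lc (h0 : 0 < α) (h1 : α < 1) (y : ℕ) :
    Fn n α y * Fn n α (y + 2) ≤ Fn n α (y + 1) * Fn n α (y + 1) := by
  rcases le_or_gt (y + 2) n with hc | hc
  · have e1 : Fn n α (y + 1) = Fn n α y + pmf n α (y + 1) := Fn_succ h0 h1 (by omega)
    have e2 : Fn n α (y + 2) = Fn n α (y + 1) + pmf n α (y + 2) := Fn_succ h0 h1 (by omega)
    have key : Fn n α y * pmf n α (y + 2) ≤ Fn n α (y + 1) * pmf n α (y + 1) := by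
      rw [Fn_eq h0 h1 (show y ≤ n by omega), Fn_eq h0 h1 (show y + 1 ≤ n by omega)]
      rw [Finset.sum_mul, Finset.sum_mul]
      have rhs : ∑ i ∈ Finset.range (y + 1 + 1), pmf n α i * pmf n α (y + 1)
          = (∑ i ∈ Finset.range (y + 1), pmf n α (i + 1) * pmf n α (y + 1))
            + pmf n α 0 * pmf n α (y + 1) := Finset.sum_range_succ' _ (y + 1)
      rw [rhs]
      have step : ∑ i ∈ Finset.range (y + 1), pmf n α i * pmf n α (y + 2) ≤
          ∑ i ∈ Finset.range (y + 1), pmf n α (i + 1) * pmf n α (y + 1) := by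
        apply Finset.sum_le_sum
        intro i hi
        simp only [Finset.mem_range] at hi
        exact pmf_lc h0 h1 (by omega) hc
      have : 0 ≤ pmf n α 0 * pmf n α (y + 1) :=
        mul_nonneg (pmf_nonneg h0 h1 _) (pmf_nonneg h0 h1 _)
      linarith
    nlinarith [Fn_pos h0 h1 y (n := n), Fn_pos h0 h1 (y + 1) (n := n)]
  · have e2 : Fn n α (y + 2) = Fn n α (y + 1) := by
      rw [Fn_stable h0 h1 (show n ≤ y + 2 by omega),
        Fn_stable h0 h1 (show n ≤ y + 1 by omega)]
    rw [e2]
    apply mul_le_mul_of_nonneg_right (Fn_mono h0 h1 (by omega))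
      (le_of_lt (Fn_pos h0 h1 _))

lemma ratio_antitone (h0 : 0 < α) (h1 : α < 1) (a : ℕ) :
    ∀ b, a ≤ b → Fn n α a * Fn n α (b + 1) ≤ Fn n α (a + 1) * Fn n α b := by
  intro b hab
  induction b, hab using Nat.le_induction with
  | base => exact le_of_eq (mul_comm _ _)
  | succ b hab IH =>
      have lc := Fn_lc h0 h1 b (n := n)
      have hpos1 := Fn_pos h0 h1 (b + 1) (n := n)
      have hpos2 := Fn_pos h0 h1 (b + 2) (n := n)
      have h5 : Fn n α a * Fn n α (b + 2) * Fn n α (b + 1) ≤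
          Fn n α (a + 1) * Fn n α (b + 1) * Fn n α (b + 1) := by
        calc Fn n α a * Fn n α (b + 2) * Fn n α (b + 1)
            = (Fn n α a * Fn n α (b + 1)) * Fn n α (b + 2) := by ring
          _ ≤ (Fn n α (a + 1) * Fn n α b) * Fn n α (b + 2) :=
              mul_le_mul_of_nonneg_right IH (le_of_lt hpos2)
          _ = Fn n α (a + 1) * (Fn n α b * Fn n α (b + 2)) := by ring
          _ ≤ Fn n α (a + 1) * (Fn n α (b + 1) * Fn n α (b + 1)) :=
              mul_le_mul_of_nonneg_left lc (le_of_lt (Fn_pos h0 h1 _))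
          _ = Fn n α (a + 1) * Fn n α (b + 1) * Fn n α (b + 1) := by ring
      exact le_of_mul_le_mul_right h5 hpos1

end HB

namespace HB2
open Finset HB

variable {n : ℕ} {α : ℝ}

/-- Key binomial lemma: there is `m ≥ 1` with `∑_{y<k+m} F(y) ≤ e·m·F(k)`. -/
lemma bin_lemma (h0 : 0 < α) (h1 : α < 1) {k : ℕ} (hk : k < n) :
    ∃ m : ℕ, 1 ≤ m ∧
      ∑ y ∈ Finset.range (k + m), Fn n α y ≤ Real.exp 1 * (m * Fn n α k) := by
  have hFpos : ∀ j, 0 < Fn n α j := Fn_pos h0 h1 (n := n)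
  set Q : ℝ := Fn n α (k + 1) / Fn n α k with hQdef
  have hQ1 : 1 < Q := by
    rw [hQdef, lt_div_iff₀ (hFpos k)]
    rw [Fn_succ h0 h1 hk]
    have := pmf_pos h0 h1 (show k + 1 ≤ n by omega)
    linarith
  have hQ0 : (0:ℝ) < Q := by linarith
  have hlogQ : 0 < Real.log Q := Real.log_pos hQ1
  set x : ℝ := 1 / Real.log Q with hxdef
  have hx0 : 0 < x := by positivity
  set m : ℕ := ⌈x⌉₊ with hmdef
  have hm1 : 1 ≤ m := Nat.one_le_ceil_iff.mpr hx0
  have hmx : x ≤ (m : ℝ) := Nat.le_ceil x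
  have hmx1 : (m : ℝ) < x + 1 := Nat.ceil_lt_add_one hx0.le
  refine ⟨m, hm1, ?_⟩
  -- step 1: Q^m ≤ e * m * (Q - 1)
  have hkey : Q ^ m ≤ Real.exp 1 * ((m : ℝ) * (Q - 1)) := by
    set s : ℝ := (m : ℝ) - x with hsdef
    have hs0 : 0 ≤ s := by simp [hsdef]; linarith
    have hs1 : s ≤ 1 := by simp [hsdef]; linarith
    have hQm : Q ^ m = Real.exp 1 * Real.exp (s * Real.log Q) := by
      rw [← Real.exp_log (pow_pos hQ0 m), Real.log_pow]
      rw [← Real.exp_add]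
      congr 1
      have : (m : ℝ) = x + s := by simp [hsdef]
      rw [this, add_mul, hxdef]
      field_simp
    have hconv : Real.exp (s * Real.log Q) ≤ 1 + s * (Q - 1) := by
      have h := convexOn_exp.2 (Set.mem_univ (0:ℝ)) (Set.mem_univ (Real.log Q))
        (by linarith : (0:ℝ) ≤ 1 - s) hs0 (by ring)
      simp only [smul_eq_mul, mul_zero, zero_add, Real.exp_zero] at h
      rw [Real.exp_log hQ0] at h
      calc Real.exp (s * Real.log Q) ≤ (1 - s) * 1 + s * Q := h
        _ = 1 + s * (Q - 1) := by ring
    have hlog_le : Real.log Q ≤ Q - 1 := Real.log_le_sub_one_of_pos hQ0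
    have hxQ : 1 ≤ x * (Q - 1) := by
      rw [hxdef]
      rw [div_mul_eq_mul_div, le_div_iff₀ hlogQ]
      linarith
    have hms : (m : ℝ) = x + s := by simp [hsdef]
    calc Q ^ m = Real.exp 1 * Real.exp (s * Real.log Q) := hQm
      _ ≤ Real.exp 1 * (1 + s * (Q - 1)) := by
          apply mul_le_mul_of_nonneg_left hconv (Real.exp_pos 1).le
      _ ≤ Real.exp 1 * ((m : ℝ) * (Q - 1)) := by
          apply mul_le_mul_of_nonneg_left _ (Real.exp_pos 1).le
          rw [hms, add_mul]
          have : 0 ≤ s * (Q - 1) := mul_nonneg hs0 (by linarith)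
          linarith
  -- step 2 : sum splits
  have hlow : ∀ y, y < k → Fn n α y * Q ≤ Fn n α (y + 1) := by
    intro y hy
    rw [hQdef, mul_div_assoc', div_le_iff₀ (hFpos k)]
    exact ratio_antitone h0 h1 y k (by omega)
  have hsumlow : ∑ y ∈ Finset.range k, Fn n α y ≤ Fn n α k / (Q - 1) := by
    rw [le_div_iff₀ (by linarith : (0:ℝ) < Q - 1), Finset.sum_mul]
    have : ∑ y ∈ Finset.range k, Fn n α y * (Q - 1) ≤
        ∑ y ∈ Finset.range k, (Fn n α (y + 1) - Fn n α y) := by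
      apply Finset.sum_le_sum
      intro y hy
      simp only [Finset.mem_range] at hy
      have h := hlow y hy
      rw [mul_sub, mul_one]
      linarith
    rw [Finset.sum_range_sub (fun y => Fn n α y)] at this
    have h00 := (hFpos 0).le
    linarith
  have hgeo : ∀ j : ℕ, Fn n α (k + j) ≤ Fn n α k * Q ^ j := by
    intro j
    induction j with
    | zero => simp
    | succ j IH =>
        have hh : Fn n α (k + j + 1) * Fn n α k ≤ Fn n α (k + 1) * Fn n α (k + j) := by
          have := ratio_antitone h0 h1 k (n := n) (k + j) (by omega)
          linarith [this]
        have : Fn n α (k + j + 1) ≤ Fn n α (k + j) * Q := by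
          rw [hQdef, mul_div_assoc', le_div_iff₀ (hFpos k)]
          linarith [hh]
        calc Fn n α (k + (j + 1)) = Fn n α (k + j + 1) := by ring_nf
          _ ≤ Fn n α (k + j) * Q := this
          _ ≤ (Fn n α k * Q ^ j) * Q := mul_le_mul_of_nonneg_right IH hQ0.le
          _ = Fn n α k * Q ^ (j + 1) := by ring
  have hsumhigh : ∑ j ∈ Finset.range m, Fn n α (k + j) ≤
      Fn n α k * ((Q ^ m - 1) / (Q - 1)) := by
    calc ∑ j ∈ Finset.range m, Fn n α (k + j)
        ≤ ∑ j ∈ Finset.range m, Fn n α k * Q ^ j :=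
          Finset.sum_le_sum (fun j _ => hgeo j)
      _ = Fn n α k * ∑ j ∈ Finset.range m, Q ^ j := by rw [Finset.mul_sum]
      _ = Fn n α k * ((Q ^ m - 1) / (Q - 1)) := by
          rw [geom_sum_eq (by linarith : Q ≠ 1)]
  have hsplit : ∑ y ∈ Finset.range (k + m), Fn n α y =
      (∑ y ∈ Finset.range k, Fn n α y) + ∑ j ∈ Finset.range m, Fn n α (k + j) :=
    Finset.sum_range_add _ k m
  rw [hsplit]
  have hQm1 : (0:ℝ) < Q - 1 := by linarith
  calc (∑ y ∈ Finset.range k, Fn n α y) + ∑ j ∈ Finset.range m, Fn n α (k + j)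
      ≤ Fn n α k / (Q - 1) + Fn n α k * ((Q ^ m - 1) / (Q - 1)) := by
        exact add_le_add hsumlow hsumhigh
    _ = Fn n α k * (Q ^ m / (Q - 1)) := by field_simp; ring
    _ ≤ Fn n α k * (Real.exp 1 * ((m : ℝ) * (Q - 1)) / (Q - 1)) := by
        gcongr
        exact (hFpos k).le
    _ = Real.exp 1 * ((m : ℝ) * Fn n α k) := by field_simp

lemma layer (M : ℕ) :
    ∑ j ∈ Finset.range (n + 1), pmf n α j * ((M - j : ℕ) : ℝ) =
      ∑ y ∈ Finset.range M, Fn n α y := by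
  induction M with
  | zero => simp
  | succ M IH =>
      rw [Finset.sum_range_succ (fun y => Fn n α y) M, ← IH]
      unfold Fn
      rw [← Finset.sum_add_distrib]
      apply Finset.sum_congr rfl
      intro j hj
      by_cases h : j ≤ M
      · have h2 : M + 1 - j = (M - j) + 1 := by omega
        rw [h2]
        push_cast
        simp only [h, if_true]
        ring
      · have h2 : M + 1 - j = 0 := by omega
        have h3 : M - j = 0 := by omega
        rw [h2, h3]
        simp [h]

lemma max_eq_cast (K j : ℕ) : max ((K : ℝ) - (j : ℝ)) 0 = ((K - j : ℕ) : ℝ) := by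
  by_cases h : j ≤ K
  · have hc : (j:ℝ) ≤ (K:ℝ) := Nat.cast_le.mpr h
    rw [max_eq_left (by linarith), Nat.cast_sub h]
  · have hc : (K:ℝ) ≤ (j:ℝ) := Nat.cast_le.mpr (by omega)
    have h2 : K - j = 0 := by omega
    rw [h2, max_eq_right (by linarith)]
    simp

end HB2

namespace HBcore
open Finset MeasureTheory ProbabilityTheory

lemma pascal_sum (α : ℝ) (m : ℕ) (g : ℕ → ℝ) :
    (1 - α) * (∑ j ∈ Finset.range (m+1), (m.choose j : ℝ) * α^j * (1-α)^(m-j) * g j)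
    + α * (∑ j ∈ Finset.range (m+1), (m.choose j : ℝ) * α^j * (1-α)^(m-j) * g (j+1))
    = ∑ j ∈ Finset.range (m+2), ((m+1).choose j : ℝ) * α^j * (1-α)^(m+1-j) * g j := by
  rw [Finset.sum_range_succ'
    (fun j => ((m+1).choose j : ℝ) * α^j * (1-α)^(m+1-j) * g j) (m+1)]
  have hsplit : ∀ j ∈ Finset.range (m+1),
      ((m+1).choose (j+1) : ℝ) * α^(j+1) * (1-α)^(m+1-(j+1)) * g (j+1)
      = α * ((m.choose j : ℝ) * α^j * (1-α)^(m-j) * g (j+1))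
        + (m.choose (j+1) : ℝ) * α^(j+1) * (1-α)^(m-j) * g (j+1) := by
    intro j hj
    rw [Nat.choose_succ_succ, Nat.succ_sub_succ]
    push_cast
    ring
  rw [Finset.sum_congr rfl hsplit, Finset.sum_add_distrib]
  have hA0 : ((m+1).choose 0 : ℝ) * α^0 * (1-α)^(m+1-0) * g 0
      = (1-α)^(m+1) * g 0 := by simp
  have hright2 : ∑ j ∈ Finset.range (m+1),
        (m.choose (j+1):ℝ) * α^(j+1) * (1-α)^(m-j) * g (j+1)
      = ∑ j ∈ Finset.range m, (m.choose (j+1):ℝ) * α^(j+1) * (1-α)^(m-j) * g (j+1) := by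
    rw [Finset.sum_range_succ]
    simp [Nat.choose_succ_self]
  have hleft : (1-α) * ∑ j ∈ Finset.range (m+1),
        (m.choose j:ℝ) * α^j * (1-α)^(m-j) * g j
      = (∑ j ∈ Finset.range m, (m.choose (j+1):ℝ) * α^(j+1) * (1-α)^(m-j) * g (j+1))
        + (1-α)^(m+1) * g 0 := by
    rw [Finset.mul_sum]
    rw [Finset.sum_range_succ'
      (fun j => (1-α) * ((m.choose j:ℝ) * α^j * (1-α)^(m-j) * g j)) m]
    congr 1
    · apply Finset.sum_congr rfl
      intro j hj
      simp only [Finset.mem_range] at hj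
      have h2 : m - j = (m - (j+1)) + 1 := by omega
      rw [h2, pow_succ]
      ring
    · simp only [Nat.choose_zero_right, Nat.cast_one, pow_zero, Nat.sub_zero]
      rw [pow_succ]
      ring
  rw [hA0, hright2, ← Finset.mul_sum]
  linarith [hleft]

variable {Ω : Type*} [MeasurableSpace Ω] {μ : Measure Ω} [IsProbabilityMeasure μ]

lemma integrable_of_bdd {g : Ω → ℝ} (hg : Measurable g) {C : ℝ} (h : ∀ ω, |g ω| ≤ C) :
    Integrable g μ :=
  ⟨hg.aestronglyMeasurable,
    HasFiniteIntegral.of_bounded (C := C) (ae_of_all _ (by simpa using h))⟩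

lemma core {n : ℕ} (L : Fin n → Ω → ℝ) (hmeas : ∀ i, Measurable (L i))
    (hindep : iIndepFun L μ)
    (hbdd : ∀ i ω, L i ω ∈ Set.Icc (0:ℝ) 1)
    {R : ℝ} (hmean : ∀ i, ∫ ω, L i ω ∂μ = R)
    {α : ℝ} (hα0 : 0 ≤ α) (hα1 : α ≤ 1) (hαR : α ≤ R)
    (s : Finset (Fin n)) :
    ∀ f : ℝ → ℝ, Measurable f → Antitone f →
      (∀ y x : ℝ, 0 ≤ x → x ≤ 1 → f (y + x) ≤ (1 - x) * f y + x * f (y + 1)) →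
      ∫ ω, f (∑ i ∈ s, L i ω) ∂μ ≤
        ∑ j ∈ Finset.range (s.card + 1),
          (s.card.choose j : ℝ) * α ^ j * (1 - α) ^ (s.card - j) * f j := by
  induction s using Finset.induction_on with
  | empty =>
      intro f hf hanti hchord
      simp
  | @insert a s ha IH =>
      intro f hf hanti hchord
      have hcard : (insert a s).card = s.card + 1 := Finset.card_insert_of_notMem ha
      set X : Ω → ℝ := L a with hXdef
      set Y : Ω → ℝ := fun ω => ∑ i ∈ s, L i ω with hYdef
      have hYmeas : Measurable Y := Finset.measurable_sum s (fun i _ => hmeas i)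
      have hXmeas : Measurable X := hmeas a
      have hX01 : ∀ ω, 0 ≤ X ω ∧ X ω ≤ 1 := fun ω => ⟨(hbdd a ω).1, (hbdd a ω).2⟩
      have hYbdd : ∀ ω, 0 ≤ Y ω ∧ Y ω ≤ (s.card : ℝ) := by
        intro ω
        constructor
        · exact Finset.sum_nonneg (fun i _ => (hbdd i ω).1)
        · calc ∑ i ∈ s, L i ω ≤ ∑ i ∈ s, 1 := Finset.sum_le_sum (fun i _ => (hbdd i ω).2)
            _ = (s.card : ℝ) := by simp
      -- bound for f on [0, card+1]
      set C : ℝ := |f 0| + |f ((s.card : ℝ) + 1)| with hCdef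
      have hfb : ∀ t : ℝ, 0 ≤ t → t ≤ (s.card : ℝ) + 1 → |f t| ≤ C := by
        intro t h1 h2
        have l1 : f t ≤ f 0 := hanti h1
        have l2 : f ((s.card : ℝ) + 1) ≤ f t := hanti h2
        rw [abs_le]
        constructor
        · have := neg_abs_le (f ((s.card : ℝ) + 1))
          have := abs_nonneg (f 0)
          linarith
        · have := le_abs_self (f 0)
          have := abs_nonneg (f ((s.card : ℝ) + 1))
          linarith
      have int1 : Integrable (fun ω => f (X ω + Y ω)) μ := by
        apply integrable_of_bdd (hf.comp (hXmeas.add hYmeas)) (C := C)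
        intro ω
        show |f (X ω + Y ω)| ≤ C
        exact hfb _ (by linarith [(hX01 ω).1, (hYbdd ω).1])
          (by linarith [(hX01 ω).2, (hYbdd ω).2])
      have int2 : Integrable (fun ω => f (Y ω)) μ := by
        apply integrable_of_bdd (hf.comp hYmeas) (C := C)
        intro ω
        show |f (Y ω)| ≤ C
        exact hfb _ (hYbdd ω).1 (by linarith [(hYbdd ω).2])
      have int3 : Integrable (fun ω => f (Y ω + 1)) μ := by
        apply integrable_of_bdd (hf.comp (hYmeas.add_const 1)) (C := C)
        intro ω
        show |f (Y ω + 1)| ≤ C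
        exact hfb _ (by linarith [(hYbdd ω).1]) (by linarith [(hYbdd ω).2])
      have int4 : Integrable (fun ω => X ω * (f (Y ω + 1) - f (Y ω))) μ := by
        apply integrable_of_bdd
          (hXmeas.mul ((hf.comp (hYmeas.add_const 1)).sub (hf.comp hYmeas)))
          (C := 2 * C)
        intro ω
        show |X ω * (f (Y ω + 1) - f (Y ω))| ≤ 2 * C
        rw [abs_mul]
        have b1 : |X ω| ≤ 1 := by
          rw [abs_le]; exact ⟨by linarith [(hX01 ω).1], (hX01 ω).2⟩
        have b2 : |f (Y ω + 1) - f (Y ω)| ≤ 2 * C := by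
          have c1 : |f (Y ω + 1)| ≤ C :=
            hfb _ (by linarith [(hYbdd ω).1]) (by linarith [(hYbdd ω).2])
          have c2 : |f (Y ω)| ≤ C := hfb _ (hYbdd ω).1 (by linarith [(hYbdd ω).2])
          calc |f (Y ω + 1) - f (Y ω)| ≤ |f (Y ω + 1)| + |f (Y ω)| := abs_sub _ _
            _ ≤ 2 * C := by linarith
        calc |X ω| * |f (Y ω + 1) - f (Y ω)| ≤ 1 * (2 * C) :=
            mul_le_mul b1 b2 (abs_nonneg _) zero_le_one
          _ = 2 * C := by ring
      -- step 1: pointwise chord bound and independence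
      have hsum_eq : ∀ ω, ∑ i ∈ insert a s, L i ω = X ω + Y ω := by
        intro ω
        rw [Finset.sum_insert ha]
      have step1 : ∫ ω, f (∑ i ∈ insert a s, L i ω) ∂μ ≤
          (∫ ω, f (Y ω) ∂μ) + ∫ ω, X ω * (f (Y ω + 1) - f (Y ω)) ∂μ := by
        rw [← integral_add int2 int4]
        apply integral_mono (by simpa only [hsum_eq] using int1) (int2.add int4)
        intro ω
        simp only [hsum_eq ω]
        have h := hchord (Y ω) (X ω) (hX01 ω).1 (hX01 ω).2
        calc f (X ω + Y ω) = f (Y ω + X ω) := by rw [add_comm]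
          _ ≤ (1 - X ω) * f (Y ω) + X ω * f (Y ω + 1) := h
          _ = f (Y ω) + X ω * (f (Y ω + 1) - f (Y ω)) := by ring
      have hindepYX : IndepFun Y X μ := by
        have h := hindep.indepFun_finsetSum_of_notMem hmeas ha
        have he : (∑ j ∈ s, L j) = Y := by
          ext ω; rw [hYdef]; simp [Finset.sum_apply]
        rwa [he] at h
      have hg_meas : Measurable (fun y : ℝ => f (y + 1) - f y) :=
        (hf.comp (measurable_id.add_const 1)).sub hf
      have hindepXg : IndepFun X (fun ω => f (Y ω + 1) - f (Y ω)) μ :=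
        (hindepYX.symm).comp measurable_id hg_meas
      have step3 : ∫ ω, X ω * (f (Y ω + 1) - f (Y ω)) ∂μ =
          R * ∫ ω, (f (Y ω + 1) - f (Y ω)) ∂μ := by
        rw [hindepXg.integral_fun_mul_eq_mul_integral hXmeas.aestronglyMeasurable
          ((hf.comp (hYmeas.add_const 1)).sub (hf.comp hYmeas)).aestronglyMeasurable]
        rw [hmean a]
      have hint_nonpos : ∫ ω, (f (Y ω + 1) - f (Y ω)) ∂μ ≤ 0 := by
        apply integral_nonpos
        intro ω
        simp only [Pi.zero_apply]
        have : f (Y ω + 1) ≤ f (Y ω) := hanti (by linarith)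
        linarith
      have step4 : R * (∫ ω, (f (Y ω + 1) - f (Y ω)) ∂μ) ≤
          α * ∫ ω, (f (Y ω + 1) - f (Y ω)) ∂μ :=
        mul_le_mul_of_nonpos_right hαR hint_nonpos
      have step5 : (∫ ω, f (Y ω) ∂μ) + α * ∫ ω, (f (Y ω + 1) - f (Y ω)) ∂μ
          = (1 - α) * (∫ ω, f (Y ω) ∂μ) + α * ∫ ω, f (Y ω + 1) ∂μ := by
        rw [integral_sub int3 int2]
        ring
      -- apply IH
      have IH1 := IH f hf hanti hchord
      have hf' : Measurable (fun y : ℝ => f (y + 1)) := hf.comp (measurable_id.add_const 1)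
      have hanti' : Antitone (fun y : ℝ => f (y + 1)) := by
        intro u v huv
        exact hanti (by linarith)
      have hchord' : ∀ y x : ℝ, 0 ≤ x → x ≤ 1 →
          (fun y : ℝ => f (y + 1)) (y + x) ≤
            (1 - x) * (fun y : ℝ => f (y + 1)) y + x * (fun y : ℝ => f (y + 1)) (y + 1) := by
        intro y x hx0 hx1
        simp only
        have h := hchord (y + 1) x hx0 hx1
        calc f (y + x + 1) = f ((y + 1) + x) := by ring_nf
          _ ≤ (1 - x) * f (y + 1) + x * f ((y + 1) + 1) := h
          _ = (1 - x) * f (y + 1) + x * f ((y + 1) + 1) := rfl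
      have IH2 := IH (fun y => f (y + 1)) hf' hanti' hchord'
      -- combine
      have comb : (1 - α) * (∫ ω, f (Y ω) ∂μ) + α * (∫ ω, f (Y ω + 1) ∂μ) ≤
          (1 - α) * (∑ j ∈ Finset.range (s.card + 1),
            (s.card.choose j : ℝ) * α ^ j * (1 - α) ^ (s.card - j) * f j)
          + α * (∑ j ∈ Finset.range (s.card + 1),
            (s.card.choose j : ℝ) * α ^ j * (1 - α) ^ (s.card - j)
              * f (((j + 1 : ℕ) : ℝ))) := by
        apply add_le_add
        · apply mul_le_mul_of_nonneg_left _ (by linarith)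
          exact IH1
        · apply mul_le_mul_of_nonneg_left _ hα0
          calc ∫ ω, f (Y ω + 1) ∂μ
              ≤ ∑ j ∈ Finset.range (s.card + 1),
                (s.card.choose j : ℝ) * α ^ j * (1 - α) ^ (s.card - j) * f ((j : ℝ) + 1) := IH2
            _ = ∑ j ∈ Finset.range (s.card + 1),
                (s.card.choose j : ℝ) * α ^ j * (1 - α) ^ (s.card - j) * f (((j + 1 : ℕ) : ℝ)) := by
                apply Finset.sum_congr rfl
                intro j hj
                push_cast
                ring
      calc ∫ ω, f (∑ i ∈ insert a s, L i ω) ∂μ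
          ≤ (∫ ω, f (Y ω) ∂μ) + ∫ ω, X ω * (f (Y ω + 1) - f (Y ω)) ∂μ := step1
        _ = (∫ ω, f (Y ω) ∂μ) + R * ∫ ω, (f (Y ω + 1) - f (Y ω)) ∂μ := by rw [step3]
        _ ≤ (∫ ω, f (Y ω) ∂μ) + α * ∫ ω, (f (Y ω + 1) - f (Y ω)) ∂μ := by linarith [step4]
        _ = (1 - α) * (∫ ω, f (Y ω) ∂μ) + α * ∫ ω, f (Y ω + 1) ∂μ := step5
        _ ≤ _ := comb
        _ = ∑ j ∈ Finset.range (s.card + 2),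
              ((s.card + 1).choose j : ℝ) * α ^ j * (1 - α) ^ (s.card + 1 - j)
                * f (j : ℕ) := pascal_sum α s.card (fun j => f (j : ℕ))
        _ = _ := by rw [hcard]

end HBcore

namespace HBmain
open Finset MeasureTheory ProbabilityTheory HB HB2 HBcore Filter

variable {Ω : Type*} [MeasurableSpace Ω] {μ : Measure Ω} [IsProbabilityMeasure μ]
  {n : ℕ} {L : Fin n → Ω → ℝ} {R α : ℝ}

lemma meas_le_integral {E : Set Ω} {g : Ω → ℝ} (hg : Integrable g μ)
    (hg0 : ∀ ω, 0 ≤ g ω) (hge : ∀ ω ∈ E, 1 ≤ g ω) :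
    μ E ≤ ENNReal.ofReal (∫ ω, g ω ∂μ) := by
  have h := mul_meas_ge_le_integral_of_nonneg (ae_of_all _ hg0) hg 1
  rw [one_mul] at h
  calc μ E ≤ μ {ω | 1 ≤ g ω} := measure_mono (fun ω hω => hge ω hω)
    _ = ENNReal.ofReal ((μ {ω | 1 ≤ g ω}).toReal) :=
        (ENNReal.ofReal_toReal (measure_ne_top μ _)).symm
    _ ≤ ENNReal.ofReal (∫ ω, g ω ∂μ) := ENNReal.ofReal_le_ofReal h

lemma chernoff_raw (hmeas : ∀ i, Measurable (L i))
    (hindep : iIndepFun L μ)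
    (hbdd : ∀ i ω, L i ω ∈ Set.Icc (0:ℝ) 1)
    (hmean : ∀ i, ∫ ω, L i ω ∂μ = R)
    (hα0 : 0 < α) (hα1 : α < 1) (hαR : α ≤ R)
    {lam : ℝ} (hlam : 0 ≤ lam) (c : ℝ) :
    μ {ω | ∑ i, L i ω ≤ c} ≤
      ENNReal.ofReal (Real.exp (lam * c) * (α * Real.exp (-lam) + (1 - α)) ^ n) := by
  set f : ℝ → ℝ := fun x => Real.exp (lam * (c - x)) with hfdef
  have hfmeas : Measurable f :=
    Real.measurable_exp.comp ((measurable_const.sub measurable_id).const_mul lam)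
  have hfanti : Antitone f := by
    intro u v huv
    apply Real.exp_le_exp.mpr
    nlinarith
  have hfchord : ∀ y x : ℝ, 0 ≤ x → x ≤ 1 → f (y + x) ≤ (1 - x) * f y + x * f (y + 1) := by
    intro y x hx0 hx1
    have hconv := convexOn_exp.2 (Set.mem_univ (0:ℝ)) (Set.mem_univ (-lam))
      (by linarith : (0:ℝ) ≤ 1 - x) hx0 (by ring)
    simp only [smul_eq_mul, mul_zero, zero_add, Real.exp_zero, mul_one] at hconv
    have key : Real.exp (-(lam * x)) ≤ (1 - x) + x * Real.exp (-lam) := by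
      have : x * -lam = -(lam * x) := by ring
      rw [this] at hconv
      linarith
    have e1 : f (y + x) = f y * Real.exp (-(lam * x)) := by
      rw [hfdef]
      simp only
      rw [← Real.exp_add]
      congr 1
      ring
    have e2 : f (y + 1) = f y * Real.exp (-lam) := by
      rw [hfdef]
      simp only
      rw [← Real.exp_add]
      congr 1
      ring
    have hfy : 0 < f y := Real.exp_pos _
    calc f (y + x) = f y * Real.exp (-(lam * x)) := e1
      _ ≤ f y * ((1 - x) + x * Real.exp (-lam)) :=
          mul_le_mul_of_nonneg_left key hfy.le
      _ = (1 - x) * f y + x * (f y * Real.exp (-lam)) := by ring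
      _ = (1 - x) * f y + x * f (y + 1) := by rw [← e2]
  have hcore := core L hmeas hindep hbdd hmean hα0.le hα1.le hαR Finset.univ
    f hfmeas hfanti hfchord
  have hcard : (Finset.univ : Finset (Fin n)).card = n := by simp
  rw [hcard] at hcore
  have hSmeas : Measurable (fun ω => ∑ i, L i ω) :=
    Finset.measurable_sum _ (fun i _ => hmeas i)
  have hS0 : ∀ ω, 0 ≤ ∑ i, L i ω :=
    fun ω => Finset.sum_nonneg (fun i _ => (hbdd i ω).1)
  have hint : Integrable (fun ω => f (∑ i, L i ω)) μ := by
    apply integrable_of_bdd (hg := hfmeas.comp hSmeas) (C := f 0)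
    intro ω
    show |f (∑ i, L i ω)| ≤ f 0
    rw [abs_of_pos (Real.exp_pos _)]
    exact hfanti (hS0 ω)
  have step1 : μ {ω | ∑ i, L i ω ≤ c} ≤ ENNReal.ofReal (∫ ω, f (∑ i, L i ω) ∂μ) := by
    apply meas_le_integral hint (fun ω => (Real.exp_pos _).le)
    intro ω hω
    simp only [Set.mem_setOf_eq] at hω
    have : 0 ≤ lam * (c - ∑ i, L i ω) := mul_nonneg hlam (by linarith)
    exact Real.one_le_exp this
  have hsum : ∑ j ∈ Finset.range (n + 1),
      (n.choose j : ℝ) * α ^ j * (1 - α) ^ (n - j) * f j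
      = Real.exp (lam * c) * (α * Real.exp (-lam) + (1 - α)) ^ n := by
    rw [add_pow (α * Real.exp (-lam)) (1 - α) n, Finset.mul_sum]
    apply Finset.sum_congr rfl
    intro j hj
    have e3 : f (j : ℝ) = Real.exp (lam * c) * (Real.exp (-lam)) ^ j := by
      rw [hfdef]
      simp only
      rw [← Real.exp_nat_mul, ← Real.exp_add]
      congr 1
      push_cast
      ring
    rw [e3, mul_pow]
    ring
  calc μ {ω | ∑ i, L i ω ≤ c} ≤ ENNReal.ofReal (∫ ω, f (∑ i, L i ω) ∂μ) := step1
    _ ≤ ENNReal.ofReal (Real.exp (lam * c) * (α * Real.exp (-lam) + (1 - α)) ^ n) := by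
        apply ENNReal.ofReal_le_ofReal
        rw [← hsum]
        exact hcore

lemma chernoff_zero (hmeas : ∀ i, Measurable (L i))
    (hindep : iIndepFun L μ)
    (hbdd : ∀ i ω, L i ω ∈ Set.Icc (0:ℝ) 1)
    (hmean : ∀ i, ∫ ω, L i ω ∂μ = R)
    (hα0 : 0 < α) (hα1 : α < 1) (hαR : α ≤ R) :
    μ {ω | ∑ i, L i ω ≤ 0} ≤ ENNReal.ofReal ((1 - α) ^ n) := by
  have key : ∀ ε : ℝ, 0 < ε → ε ≤ α →
      μ {ω | ∑ i, L i ω ≤ 0} ≤ ENNReal.ofReal ((1 - α + ε) ^ n) := by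
    intro ε hε hεα
    have hlam : 0 ≤ Real.log (α / ε) := Real.log_nonneg (by rw [le_div_iff₀ hε]; linarith)
    have h := chernoff_raw hmeas hindep hbdd hmean hα0 hα1 hαR hlam 0
    have e1 : α * Real.exp (-Real.log (α / ε)) = ε := by
      rw [Real.exp_neg, Real.exp_log (by positivity)]
      field_simp
    rw [e1] at h
    simp only [mul_zero, Real.exp_zero, one_mul] at h
    have e2 : (ε + (1 - α)) ^ n = (1 - α + ε) ^ n := by ring_nf
    rwa [e2] at h
  have htend : Tendsto (fun k : ℕ => ENNReal.ofReal ((1 - α + 1/((k:ℝ)+1)) ^ n))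
      atTop (nhds (ENNReal.ofReal ((1 - α) ^ n))) := by
    apply (ENNReal.continuous_ofReal.tendsto _).comp
    have h1 : Tendsto (fun k : ℕ => 1 - α + 1/((k:ℝ)+1)) atTop (nhds (1 - α + 0)) :=
      tendsto_const_nhds.add tendsto_one_div_add_atTop_nhds_zero_nat
    rw [add_zero] at h1
    exact h1.pow n
  apply ge_of_tendsto htend
  have hev : ∀ᶠ k : ℕ in atTop, 1/((k:ℝ)+1) ≤ α := by
    refine Filter.eventually_atTop.mpr ⟨⌈1/α⌉₊, fun k hk => ?_⟩
    have h1 : (1:ℝ)/α ≤ (k:ℝ) := le_trans (Nat.le_ceil _) (by exact_mod_cast hk)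
    rw [div_le_iff₀ (by positivity : (0:ℝ) < (k:ℝ)+1)]
    rw [div_le_iff₀ hα0] at h1
    nlinarith
  filter_upwards [hev] with k hk
  exact key _ (by positivity) hk

lemma h1_self (hα0 : 0 < α) (hα1 : α < 1) : h1 α α = 0 := by
  unfold h1
  rw [div_self (ne_of_gt hα0), div_self (by linarith : (1:ℝ) - α ≠ 0)]
  simp

lemma chernoff_bound (hmeas : ∀ i, Measurable (L i))
    (hindep : iIndepFun L μ)
    (hbdd : ∀ i ω, L i ω ∈ Set.Icc (0:ℝ) 1)
    (hmean : ∀ i, ∫ ω, L i ω ∂μ = R)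
    (hα0 : 0 < α) (hα1 : α < 1) (hαR : α ≤ R)
    {a : ℝ} (ha0 : 0 ≤ a) (ha1 : a ≤ 1) :
    μ {ω | ∑ i, L i ω ≤ (n:ℝ) * a} ≤
      ENNReal.ofReal (Real.exp (-(n:ℝ) * h1 (min a α) α)) := by
  rcases le_or_gt α a with hcase | hcase
  · rw [min_eq_right hcase, h1_self hα0 hα1]
    simp only [mul_zero, Real.exp_zero, ENNReal.ofReal_one]
    exact prob_le_one
  · rcases eq_or_lt_of_le ha0 with hzero | hpos
    · -- a = 0
      have ha : a = 0 := hzero.symm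
      subst ha
      have hmin : min (0:ℝ) α = 0 := min_eq_left hα0.le
      rw [hmin]
      have hh1 : h1 0 α = -Real.log (1 - α) := by
        unfold h1
        simp only [zero_mul, sub_zero, one_mul, zero_add, zero_div]
        rw [one_div, Real.log_inv]
      rw [hh1]
      have h1α : (0:ℝ) < 1 - α := by linarith
      have hrhs : Real.exp (-(n:ℝ) * -Real.log (1 - α)) = (1 - α) ^ n := by
        rw [neg_mul_neg, ← Real.log_pow, Real.exp_log (pow_pos h1α n)]
      rw [hrhs]
      have hev : {ω | ∑ i, L i ω ≤ (n:ℝ) * 0} = {ω | ∑ i, L i ω ≤ 0} := by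
        simp
      rw [hev]
      exact chernoff_zero hmeas hindep hbdd hmean hα0 hα1 hαR
    · -- 0 < a < α
      have h1a : (0:ℝ) < 1 - a := by linarith
      have h1α : (0:ℝ) < 1 - α := by linarith
      set lam : ℝ := Real.log (α * (1 - a) / (a * (1 - α))) with hlamdef
      have harg : 1 < α * (1 - a) / (a * (1 - α)) := by
        rw [lt_div_iff₀ (by positivity)]
        nlinarith
      have hlam : 0 < lam := Real.log_pos harg
      have h := chernoff_raw hmeas hindep hbdd hmean hα0 hα1 hαR hlam.le ((n:ℝ) * a)
      have hexp : α * Real.exp (-lam) + (1 - α) = (1 - α) / (1 - a) := by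
        rw [hlamdef, Real.exp_neg, Real.exp_log (by positivity)]
        field_simp
        ring
      rw [hexp] at h
      have hmin : min a α = a := min_eq_left hcase.le
      rw [hmin]
      have heq : Real.exp (lam * ((n:ℝ) * a)) * ((1 - α) / (1 - a)) ^ n
          = Real.exp (-(n:ℝ) * h1 a α) := by
        rw [← Real.exp_log (pow_pos (by positivity : (0:ℝ) < (1-α)/(1-a)) n),
          Real.log_pow, ← Real.exp_add]
        congr 1
        rw [Real.log_div (ne_of_gt h1α) (ne_of_gt h1a)]
        unfold h1
        rw [hlamdef, Real.log_div (by positivity) (by positivity),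
          Real.log_mul (ne_of_gt hα0) (ne_of_gt h1a),
          Real.log_mul (ne_of_gt hpos) (ne_of_gt h1α),
          Real.log_div (ne_of_gt hpos) (ne_of_gt hα0),
          Real.log_div (ne_of_gt h1a) (ne_of_gt h1α)]
        ring
      rwa [heq] at h


lemma bentkus_bound (hmeas : ∀ i, Measurable (L i))
    (hindep : iIndepFun L μ)
    (hbdd : ∀ i ω, L i ω ∈ Set.Icc (0:ℝ) 1)
    (hmean : ∀ i, ∫ ω, L i ω ∂μ = R)
    (hα0 : 0 < α) (hα1 : α < 1) (hαR : α ≤ R)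
    {k : ℕ} (hk : k < n) :
    μ {ω | ∑ i, L i ω ≤ (k:ℝ)} ≤ ENNReal.ofReal (Real.exp 1 * Fn n α k) := by
  obtain ⟨m, hm1, hsum⟩ := bin_lemma hα0 hα1 hk (n := n)
  have hm0 : (0:ℝ) < (m:ℝ) := by exact_mod_cast hm1
  set K : ℕ := k + m with hKdef
  set f : ℝ → ℝ := fun x => max ((K:ℝ) - x) 0 / m with hfdef
  have hfmeas : Measurable f :=
    ((measurable_const.sub measurable_id).max measurable_const).div_const _
  have hfanti : Antitone f := by
    intro u v huv
    rw [hfdef]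
    simp only
    exact (div_le_div_iff_of_pos_right hm0).mpr (max_le_max (by linarith) le_rfl)
  have hfchord : ∀ y x : ℝ, 0 ≤ x → x ≤ 1 → f (y+x) ≤ (1-x) * f y + x * f (y+1) := by
    intro y x hx0 hx1
    rw [hfdef]
    simp only
    have e0 : (1-x) * (max ((K:ℝ) - y) 0 / m) + x * (max ((K:ℝ) - (y+1)) 0 / m)
        = ((1-x) * max ((K:ℝ) - y) 0 + x * max ((K:ℝ) - (y+1)) 0) / m := by ring
    rw [e0]
    rw [div_le_div_iff_of_pos_right hm0]
    set c : ℝ := (K:ℝ) - y with hcdef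
    have e1 : (K:ℝ) - (y+x) = c - x := by rw [hcdef]; ring
    have e2 : (K:ℝ) - (y+1) = c - 1 := by rw [hcdef]; ring
    rw [e1, e2]
    rcases le_total c 0 with hc | hc
    · rw [max_eq_right (by linarith : c - x ≤ 0)]
      exact add_nonneg (mul_nonneg (by linarith) (le_max_right _ _))
        (mul_nonneg hx0 (le_max_right _ _))
    · rcases le_total c 1 with hc1 | hc1
      · rw [max_eq_left hc, max_eq_right (by linarith : c - 1 ≤ 0), mul_zero, add_zero]
        rcases le_total (c - x) 0 with h2 | h2
        · rw [max_eq_right h2]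
          nlinarith
        · rw [max_eq_left h2]
          nlinarith
      · rw [max_eq_left hc, max_eq_left (by linarith : (0:ℝ) ≤ c - 1),
          max_eq_left (by linarith : (0:ℝ) ≤ c - x)]
        nlinarith
  have hcore := core L hmeas hindep hbdd hmean hα0.le hα1.le hαR Finset.univ
    f hfmeas hfanti hfchord
  have hcard : (Finset.univ : Finset (Fin n)).card = n := by simp
  rw [hcard] at hcore
  have hSmeas : Measurable (fun ω => ∑ i, L i ω) :=
    Finset.measurable_sum _ (fun i _ => hmeas i)
  have hS0 : ∀ ω, 0 ≤ ∑ i, L i ω :=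
    fun ω => Finset.sum_nonneg (fun i _ => (hbdd i ω).1)
  have hf0 : ∀ t : ℝ, 0 ≤ f t := by
    intro t
    rw [hfdef]
    exact div_nonneg (le_max_right _ _) hm0.le
  have hint : Integrable (fun ω => f (∑ i, L i ω)) μ := by
    apply integrable_of_bdd (hg := hfmeas.comp hSmeas) (C := f 0)
    intro ω
    show |f (∑ i, L i ω)| ≤ f 0
    rw [abs_of_nonneg (hf0 _)]
    exact hfanti (hS0 ω)
  have step1 : μ {ω | ∑ i, L i ω ≤ (k:ℝ)} ≤
      ENNReal.ofReal (∫ ω, f (∑ i, L i ω) ∂μ) := by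
    apply meas_le_integral hint (fun ω => hf0 _)
    intro ω hω
    simp only [Set.mem_setOf_eq] at hω
    rw [hfdef]
    simp only
    rw [le_div_iff₀ hm0, one_mul]
    have hKk : (K:ℝ) - ∑ i, L i ω ≥ (m:ℝ) := by
      have : (K:ℝ) = (k:ℝ) + m := by rw [hKdef]; push_cast; ring
      linarith
    calc (m:ℝ) ≤ (K:ℝ) - ∑ i, L i ω := hKk
      _ ≤ max ((K:ℝ) - ∑ i, L i ω) 0 := le_max_left _ _
  have hsum2 : ∑ j ∈ Finset.range (n + 1),
      (n.choose j : ℝ) * α ^ j * (1 - α) ^ (n - j) * f j ≤ Real.exp 1 * Fn n α k := by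
    have e4 : ∀ j ∈ Finset.range (n+1),
        (n.choose j:ℝ) * α^j * (1-α)^(n-j) * f j
          = pmf n α j * (((K - j : ℕ):ℝ)) / m := by
      intro j hj
      rw [hfdef]
      simp only
      rw [← max_eq_cast K j]
      unfold pmf
      ring
    rw [Finset.sum_congr rfl e4, ← Finset.sum_div, layer K]
    rw [div_le_iff₀ hm0]
    calc ∑ y ∈ Finset.range K, Fn n α y ≤ Real.exp 1 * ((m:ℝ) * Fn n α k) := hsum
      _ = Real.exp 1 * Fn n α k * m := by ring
  calc μ {ω | ∑ i, L i ω ≤ (k:ℝ)} ≤ ENNReal.ofReal (∫ ω, f (∑ i, L i ω) ∂μ) := step1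
    _ ≤ ENNReal.ofReal (Real.exp 1 * Fn n α k) :=
        ENNReal.ofReal_le_ofReal (hcore.trans hsum2)


lemma binomCDF_eq_Fn (k : ℕ) : binomCDF n α (k : ℤ) = Fn n α k := by
  unfold binomCDF Fn HB.pmf
  apply Finset.sum_congr rfl
  intro j hj
  by_cases h : j ≤ k
  · rw [if_pos (by exact_mod_cast h), if_pos h]
  · rw [if_neg (by exact_mod_cast h), if_neg h]


end HBmain


/-- The hybridized Hoeffding–Bentkus p-value is a valid p-value for the
null hypothesis `R > α`, where `R` is the common mean of i.i.d. `[0,1]`-valued losses. -/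
theorem hoeffding_bentkus_p_value
    {Ω : Type*} [MeasurableSpace Ω] (μ : Measure Ω) [IsProbabilityMeasure μ]
    {n : ℕ} (hn : 0 < n) (L : Fin n → Ω → ℝ)
    (hmeas : ∀ i, Measurable (L i))
    (hiid_indep : iIndepFun L μ)
    (hiid_ident : ∀ i, IdentDistrib (L i) (L ⟨0, hn⟩) μ μ)
    (hbdd : ∀ i ω, L i ω ∈ Set.Icc (0 : ℝ) 1)
    (R : ℝ) (hmean : ∀ i, ∫ ω, L i ω ∂μ = R)
    (α : ℝ) (hα : α ∈ Set.Ioo (0 : ℝ) 1)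
    (Rhat : Ω → ℝ) (hRhat : ∀ ω, Rhat ω = (1 / (n : ℝ)) * ∑ i, L i ω)
    (pHB : Ω → ℝ)
    (hpHB : ∀ ω, pHB ω =
      min (Real.exp (-(n : ℝ) * h1 (min (Rhat ω) α) α))
        (Real.exp 1 * binomCDF n α ⌈(n : ℝ) * Rhat ω⌉))
    (hnull : R > α) :
    ∀ u ∈ Set.Icc (0 : ℝ) 1, μ {ω | pHB ω ≤ u} ≤ ENNReal.ofReal u := by
  classical
  intro u hu
  obtain ⟨hu0, hu1⟩ := hu
  obtain ⟨hα0, hα1⟩ := hα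
  have hαR : α ≤ R := le_of_lt hnull
  have hn0 : (0:ℝ) < (n:ℝ) := by exact_mod_cast hn
  -- basic facts about Rhat and S
  have hRS : ∀ ω, (n:ℝ) * Rhat ω = ∑ i, L i ω := by
    intro ω
    rw [hRhat ω]
    field_simp
  have hS0 : ∀ ω, 0 ≤ ∑ i, L i ω :=
    fun ω => Finset.sum_nonneg (fun i _ => (hbdd i ω).1)
  have hSn : ∀ ω, ∑ i, L i ω ≤ (n:ℝ) := by
    intro ω
    calc ∑ i, L i ω ≤ ∑ _i : Fin n, (1:ℝ) :=
        Finset.sum_le_sum (fun i _ => (hbdd i ω).2)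
      _ = (n:ℝ) := by simp
  have hRhat0 : ∀ ω, 0 ≤ Rhat ω := by
    intro ω
    rw [hRhat ω]
    exact mul_nonneg (by positivity) (hS0 ω)
  have hRhat1 : ∀ ω, Rhat ω ≤ 1 := by
    intro ω
    rw [hRhat ω]
    rw [one_div, inv_mul_le_iff₀ hn0, mul_one]
    exact hSn ω
  -- the continuous version of h1 (min · α) α
  set ψ : ℝ → ℝ := fun t => (t * Real.log t - t * Real.log α)
      + ((1-t) * Real.log (1-t) - (1-t) * Real.log (1-α)) with hψdef
  have hψcont : Continuous ψ := by
    apply Continuous.add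
    · exact Real.continuous_mul_log.sub (continuous_id.mul continuous_const)
    · apply Continuous.sub
      · have : Continuous fun t : ℝ => (1 - t) := continuous_const.sub continuous_id
        exact Real.continuous_mul_log.comp this
      · exact (continuous_const.sub continuous_id).mul continuous_const
  have hψeq : ∀ t : ℝ, 0 ≤ t → t < 1 → h1 t α = ψ t := by
    intro t ht0 ht1
    rcases eq_or_lt_of_le ht0 with h0 | h0
    · rw [← h0]
      unfold h1
      rw [hψdef]
      simp only [zero_mul, sub_zero, one_mul, zero_add, zero_div, Real.log_zero,
        zero_sub, sub_zero, mul_zero, Real.log_one]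
      rw [one_div, Real.log_inv]
    · unfold h1
      rw [hψdef]
      rw [Real.log_div (ne_of_gt h0) (ne_of_gt hα0),
        Real.log_div (by linarith : (1:ℝ) - t ≠ 0) (by linarith : (1:ℝ) - α ≠ 0)]
      ring
  have hmin01 : ∀ r : ℝ, 0 ≤ r → 0 ≤ min r α ∧ min r α < 1 :=
    fun r hr => ⟨le_min hr hα0.le, lt_of_le_of_lt (min_le_right _ _) hα1⟩
  -- events
  set EA : Set Ω := {ω | Real.exp (-(n : ℝ) * h1 (min (Rhat ω) α) α) ≤ u} with hEAdef
  set EB : Set Ω := {ω | Real.exp 1 * binomCDF n α ⌈(n : ℝ) * Rhat ω⌉ ≤ u} with hEBdef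
  have hsub : {ω | pHB ω ≤ u} ⊆ EA ∪ EB := by
    intro ω hω
    simp only [Set.mem_setOf_eq] at hω
    rw [hpHB ω] at hω
    rcases min_le_iff.mp hω with h | h
    · exact Or.inl h
    · exact Or.inr h
  -- part A : threshold for the Hoeffding part
  have partA : EA.Nonempty → ∃ a : ℝ, 0 ≤ a ∧ a ≤ 1 ∧
      EA ⊆ {ω | ∑ i, L i ω ≤ (n:ℝ) * a} ∧
      Real.exp (-(n : ℝ) * h1 (min a α) α) ≤ u := by
    rintro ⟨ω₀, hω₀⟩
    set D : Set ℝ := Set.Icc (0:ℝ) 1 ∩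
      (fun r => Real.exp (-(n : ℝ) * ψ (min r α))) ⁻¹' Set.Iic u with hDdef
    have hmem : ∀ ω, ω ∈ EA → Rhat ω ∈ D := by
      intro ω hω
      simp only [hEAdef, Set.mem_setOf_eq] at hω
      constructor
      · exact ⟨hRhat0 ω, hRhat1 ω⟩
      · simp only [Set.mem_preimage, Set.mem_Iic]
        obtain ⟨hm0, hm1⟩ := hmin01 (Rhat ω) (hRhat0 ω)
        rw [← hψeq _ hm0 hm1]
        exact hω
    have hDne : D.Nonempty := ⟨Rhat ω₀, hmem ω₀ hω₀⟩
    have hDclosed : IsClosed D := by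
      apply IsClosed.inter isClosed_Icc
      apply IsClosed.preimage _ isClosed_Iic
      apply Real.continuous_exp.comp
      apply Continuous.mul continuous_const
      exact hψcont.comp (continuous_id.min continuous_const)
    have hDbdd : BddAbove D := ⟨1, fun r hr => hr.1.2⟩
    set a : ℝ := sSup D with hadef
    have haD : a ∈ D := hDclosed.csSup_mem hDne hDbdd
    refine ⟨a, haD.1.1, haD.1.2, ?_, ?_⟩
    · intro ω hω
      simp only [Set.mem_setOf_eq]
      rw [← hRS ω]
      have : Rhat ω ≤ a := le_csSup hDbdd (hmem ω hω)
      nlinarith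
    · have h2 := haD.2
      simp only [Set.mem_preimage, Set.mem_Iic] at h2
      obtain ⟨hm0, hm1⟩ := hmin01 a haD.1.1
      rw [hψeq _ hm0 hm1]
      exact h2
  -- part B : threshold for the Bentkus part
  have partB : EB.Nonempty → ∃ k : ℕ, k < n ∧
      EB ⊆ {ω | ∑ i, L i ω ≤ (k:ℝ)} ∧
      Real.exp 1 * HB.Fn n α k ≤ u := by
    rintro ⟨ω₀, hω₀⟩
    set T : Finset ℤ := (Finset.Icc (0:ℤ) (n:ℤ)).filter
      (fun k => Real.exp 1 * binomCDF n α k ≤ u) with hTdef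
    have hmemT : ∀ ω, ω ∈ EB → ⌈(n : ℝ) * Rhat ω⌉ ∈ T := by
      intro ω hω
      simp only [hEBdef, Set.mem_setOf_eq] at hω
      rw [hTdef, Finset.mem_filter, Finset.mem_Icc]
      refine ⟨⟨?_, ?_⟩, hω⟩
      · exact Int.ceil_nonneg (mul_nonneg hn0.le (hRhat0 ω))
      · apply Int.ceil_le.mpr
        push_cast
        nlinarith [hRhat1 ω]
    have hTne : T.Nonempty := ⟨_, hmemT ω₀ hω₀⟩
    set kZ : ℤ := T.max' hTne with hkZdef
    have hkZT : kZ ∈ T := T.max'_mem hTne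
    rw [hTdef, Finset.mem_filter, Finset.mem_Icc] at hkZT
    obtain ⟨⟨hkZ0, hkZn⟩, hkZu⟩ := hkZT
    set k : ℕ := kZ.toNat with hkdef
    have hkeq : (k : ℤ) = kZ := Int.toNat_of_nonneg hkZ0
    have hkn : k ≤ n := by omega
    have hFn : Real.exp 1 * HB.Fn n α k ≤ u := by
      rw [← HBmain.binomCDF_eq_Fn, hkeq]
      exact hkZu
    have hklt : k < n := by
      rcases lt_or_eq_of_le hkn with h | h
      · exact h
      · exfalso
        rw [h] at hFn
        rw [HB.Fn_top hα0 hα1, mul_one] at hFn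
        have : (2:ℝ) ≤ Real.exp 1 := by
          have := Real.add_one_le_exp 1
          linarith
        linarith
    refine ⟨k, hklt, ?_, hFn⟩
    intro ω hω
    have hωT := hmemT ω hω
    have hle : ⌈(n : ℝ) * Rhat ω⌉ ≤ kZ := T.le_max' _ hωT
    simp only [Set.mem_setOf_eq]
    rw [← hRS ω]
    calc (n:ℝ) * Rhat ω ≤ (⌈(n : ℝ) * Rhat ω⌉ : ℝ) := Int.le_ceil _
      _ ≤ (kZ : ℝ) := by exact_mod_cast hle
      _ = (k : ℝ) := by exact_mod_cast hkeq.symm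
  -- combine
  have hboundA : ∀ a : ℝ, 0 ≤ a → a ≤ 1 →
      Real.exp (-(n : ℝ) * h1 (min a α) α) ≤ u →
      μ {ω | ∑ i, L i ω ≤ (n:ℝ) * a} ≤ ENNReal.ofReal u := by
    intro a hq0 hq1 hle
    calc μ {ω | ∑ i, L i ω ≤ (n:ℝ) * a}
        ≤ ENNReal.ofReal (Real.exp (-(n : ℝ) * h1 (min a α) α)) :=
          HBmain.chernoff_bound hmeas hiid_indep hbdd hmean hα0 hα1 hαR hq0 hq1
      _ ≤ ENNReal.ofReal u := ENNReal.ofReal_le_ofReal hle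
  have hboundB : ∀ k : ℕ, k < n → Real.exp 1 * HB.Fn n α k ≤ u →
      μ {ω | ∑ i, L i ω ≤ (k:ℝ)} ≤ ENNReal.ofReal u := by
    intro k hk hle
    calc μ {ω | ∑ i, L i ω ≤ (k:ℝ)}
        ≤ ENNReal.ofReal (Real.exp 1 * HB.Fn n α k) :=
          HBmain.bentkus_bound hmeas hiid_indep hbdd hmean hα0 hα1 hαR hk
      _ ≤ ENNReal.ofReal u := ENNReal.ofReal_le_ofReal hle
  rcases Set.eq_empty_or_nonempty EA with hEAe | hEAne
  · rcases Set.eq_empty_or_nonempty EB with hEBe | hEBne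
    · calc μ {ω | pHB ω ≤ u} ≤ μ (EA ∪ EB) := measure_mono hsub
        _ = μ ∅ := by rw [hEAe, hEBe, Set.union_empty]
        _ = 0 := measure_empty
        _ ≤ ENNReal.ofReal u := zero_le
    · obtain ⟨k, hk, hBsub, hku⟩ := partB hEBne
      have : {ω | pHB ω ≤ u} ⊆ {ω | ∑ i, L i ω ≤ (k:ℝ)} := by
        intro ω hω
        rcases hsub hω with h | h
        · rw [hEAe] at h
          exact absurd h (Set.notMem_empty ω)
        · exact hBsub h
      exact le_trans (measure_mono this) (hboundB k hk hku)
  · obtain ⟨a, ha0, ha1, hAsub, hau⟩ := partA hEAne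
    rcases Set.eq_empty_or_nonempty EB with hEBe | hEBne
    · have : {ω | pHB ω ≤ u} ⊆ {ω | ∑ i, L i ω ≤ (n:ℝ)*a} := by
        intro ω hω
        rcases hsub hω with h | h
        · exact hAsub h
        · rw [hEBe] at h
          exact absurd h (Set.notMem_empty ω)
      exact le_trans (measure_mono this) (hboundA a ha0 ha1 hau)
    · obtain ⟨k, hk, hBsub, hku⟩ := partB hEBne
      rcases le_total ((k:ℝ)) ((n:ℝ)*a) with hc | hc
      · have : {ω | pHB ω ≤ u} ⊆ {ω | ∑ i, L i ω ≤ (n:ℝ)*a} := by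
          intro ω hω
          rcases hsub hω with h | h
          · exact hAsub h
          · have := hBsub h
            simp only [Set.mem_setOf_eq] at this ⊢
            linarith
        exact le_trans (measure_mono this) (hboundA a ha0 ha1 hau)
      · have : {ω | pHB ω ≤ u} ⊆ {ω | ∑ i, L i ω ≤ (k:ℝ)} := by
          intro ω hω
          rcases hsub hω with h | h
          · have := hAsub h
            simp only [Set.mem_setOf_eq] at this ⊢
            linarith
          · exact hBsub h
        exact le_trans (measure_mono this) (hboundB k hk hku)
end

section
/- Let Z_1, ..., Z_{n+n'} be i.i.d. random variables in a measurable space 𝒵, Λ a countable index set, and S : Λ × 𝒵 → [0,1] measurable in its second argument. Let ŝ_n(λ) = (1/n)∑_{i=1}^n S(λ; Z_i), ŝ_{n'}(λ) = (1/n')∑_{i=n+1}^{n+n'} S(λ; Z_i), ŝ_{n+n'}(λ) = (1/(n+n'))∑_{i=1}^{n+n'} S(λ; Z_i), and s(λ) = E[S(λ; Z_1)]. Then for every η ≥ 0, t > 0, and γ ∈ (0,1), with κ⁺ = η + t²/2 + t·√(t²/4 + η): P( sup_{λ ∈ Λ} (ŝ_n(λ) − ŝ_{n'}(λ))/√(ŝ_{n+n'}(λ)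 + η) ≥ (1−γ)t ) ≥ P( sup_{λ ∈ Λ} (ŝ_n(λ) − s(λ))/√(ŝ_n(λ) + η) ≥ t ) · inf_{λ ∈ Λ} P( (ŝ_{n'}(λ) − s(λ))/√(s(λ) + κ⁺) ≤ γt ). -/
open MeasureTheory ProbabilityTheory

/-- `κ⁺ = η + t²/2 + t·√(t²/4 + η)`. -/
noncomputable def kappaPlus (t η : ℝ) : ℝ :=
  η + t ^ 2 / 2 + t * Real.sqrt (t ^ 2 / 4 + η)

namespace SymmAux

open Set

lemma kappa_pos {t η : ℝ} (ht : 0 < t) (hη : 0 ≤ η) : 0 < kappaPlus t η := by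
  have h1 : 0 ≤ t * Real.sqrt (t ^ 2 / 4 + η) := mul_nonneg ht.le (Real.sqrt_nonneg _)
  have h2 : 0 < t ^ 2 / 2 := by positivity
  unfold kappaPlus; linarith

lemma kappa_mono {t t' η : ℝ} (ht' : 0 < t') (htt' : t' ≤ t) (hη : 0 ≤ η) :
    kappaPlus t' η ≤ kappaPlus t η := by
  have ht : 0 < t := ht'.trans_le htt'
  have h1 : Real.sqrt (t' ^ 2 / 4 + η) ≤ Real.sqrt (t ^ 2 / 4 + η) := by
    apply Real.sqrt_le_sqrt; nlinarith
  have h2 : 0 ≤ Real.sqrt (t' ^ 2 / 4 + η) := Real.sqrt_nonneg _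
  have h3 : t' * Real.sqrt (t' ^ 2 / 4 + η) ≤ t * Real.sqrt (t ^ 2 / 4 + η) := by
    calc t' * Real.sqrt (t' ^ 2 / 4 + η) ≤ t * Real.sqrt (t' ^ 2 / 4 + η) :=
          mul_le_mul_of_nonneg_right htt' h2
      _ ≤ t * Real.sqrt (t ^ 2 / 4 + η) := mul_le_mul_of_nonneg_left h1 ht.le
  unfold kappaPlus
  nlinarith

lemma key_lower {a s η t' : ℝ} (hs : 0 ≤ s) (hη : 0 ≤ η) (ht' : 0 < t')
    (hx : 0 < Real.sqrt (a + η)) (h1 : t' * Real.sqrt (a + η) ≤ a - s) :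
    s + kappaPlus t' η ≤ a + η := by
  set x := Real.sqrt (a + η) with hxdef
  have haη : 0 < a + η := Real.sqrt_pos.mp hx
  have hx2 : x ^ 2 = a + η := Real.sq_sqrt haη.le
  set D := Real.sqrt (t' ^ 2 / 4 + s + η) with hD
  have hD2 : D ^ 2 = t' ^ 2 / 4 + s + η := Real.sq_sqrt (by positivity)
  set E := Real.sqrt (t' ^ 2 / 4 + η) with hE
  have hE2 : E ^ 2 = t' ^ 2 / 4 + η := Real.sq_sqrt (by positivity)
  have hDE : E ≤ D := Real.sqrt_le_sqrt (by linarith)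
  have hE0 : 0 ≤ E := Real.sqrt_nonneg _
  have hD0 : 0 ≤ D := Real.sqrt_nonneg _
  have hDge : t' / 2 ≤ D := by nlinarith
  have key : 0 ≤ (x - t' / 2 - D) * (x - t' / 2 + D) := by nlinarith
  have hpos2 : 0 < x - t' / 2 + D := by linarith
  have hxD : t' / 2 + D ≤ x := by nlinarith [(mul_nonneg_iff_of_pos_right hpos2).mp key]
  have hsq : (t' / 2 + D) ^ 2 ≤ x ^ 2 := by nlinarith
  have hED : t' * E ≤ t' * D := mul_le_mul_of_nonneg_left hDE ht'.le
  unfold kappaPlus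
  nlinarith

lemma det {a b s c η t t' γ p q : ℝ} (hp : 0 < p) (hq : 0 < q)
    (ha0 : 0 ≤ a) (hb0 : 0 ≤ b) (hs : 0 ≤ s) (hη : 0 ≤ η)
    (ht' : 0 < t') (htt' : t' ≤ t) (hγ : 0 ≤ γ)
    (hc : (p + q) * c = p * a + q * b)
    (h1 : t' ≤ (a - s) / Real.sqrt (a + η))
    (h2 : (b - s) / Real.sqrt (s + kappaPlus t η) ≤ γ * t)
    (hρ : 0 ≤ t' - γ * t * Real.sqrt (kappaPlus t η / kappaPlus t' η)) :
    t' - γ * t * Real.sqrt (kappaPlus t η / kappaPlus t' η) ≤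
      (a - b) / Real.sqrt (c + η) := by
  have ht : 0 < t := ht'.trans_le htt'
  have hκ := kappa_pos ht hη
  have hκ' := kappa_pos ht' hη
  have hx : 0 < Real.sqrt (a + η) := by
    rcases (Real.sqrt_nonneg (a + η)).eq_or_lt with h | h
    · rw [← h, div_zero] at h1; linarith
    · exact h
  have h1' : t' * Real.sqrt (a + η) ≤ a - s := (le_div_iff₀ hx).mp h1
  have hkey := key_lower hs hη ht' hx h1'
  have hsκ : 0 < s + kappaPlus t η := by linarith
  have h2' : b - s ≤ γ * t * Real.sqrt (s + kappaPlus t η) :=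
    (div_le_iff₀ (Real.sqrt_pos.mpr hsκ)).mp h2
  have hκκ' : kappaPlus t' η ≤ kappaPlus t η := kappa_mono ht' htt' hη
  have hsplit : Real.sqrt (s + kappaPlus t η) ≤
      Real.sqrt (kappaPlus t η / kappaPlus t' η) * Real.sqrt (a + η) := by
    rw [← Real.sqrt_mul (by positivity)]
    apply Real.sqrt_le_sqrt
    rw [div_mul_eq_mul_div, le_div_iff₀ hκ']
    nlinarith
  have hγt : 0 ≤ γ * t := mul_nonneg hγ ht.le
  have hmul := mul_le_mul_of_nonneg_left hsplit hγt
  set R := Real.sqrt (kappaPlus t η / kappaPlus t' η) with hRdef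
  set ρ := t' - γ * t * R with hρdef
  have hab : ρ * Real.sqrt (a + η) ≤ a - b := by
    have hexp : ρ * Real.sqrt (a + η)
        = t' * Real.sqrt (a + η) - γ * t * (R * Real.sqrt (a + η)) := by
      rw [hρdef]; ring
    rw [hexp]; linarith
  have hba : b ≤ a := by nlinarith [mul_nonneg hρ hx.le]
  have hca : c ≤ a := by nlinarith
  have haη : 0 < a + η := Real.sqrt_pos.mp hx
  have hc0 : 0 < c + η := by nlinarith
  have hcx : Real.sqrt (c + η) ≤ Real.sqrt (a + η) := Real.sqrt_le_sqrt (by linarith)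
  rw [le_div_iff₀ (Real.sqrt_pos.mpr hc0)]
  calc ρ * Real.sqrt (c + η) ≤ ρ * Real.sqrt (a + η) := mul_le_mul_of_nonneg_left hcx hρ
    _ ≤ a - b := hab

lemma ratio_bd {a sv η : ℝ} (ha : a ∈ Icc (0:ℝ) 1) (hs : 0 ≤ sv) (hη : 0 ≤ η) :
    (a - sv) / Real.sqrt (a + η) ≤ Real.sqrt (1 + η) := by
  rcases (Real.sqrt_nonneg (a + η)).eq_or_lt with h | h
  · rw [← h, div_zero]; exact Real.sqrt_nonneg _
  · rw [div_le_iff₀ h]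
    have h2 : Real.sqrt (a + η) ≤ Real.sqrt (1 + η) := Real.sqrt_le_sqrt (by linarith [ha.2])
    have h3 : (Real.sqrt (a + η)) ^ 2 = a + η := Real.sq_sqrt (by linarith [ha.1])
    nlinarith [ha.1, h.le]

lemma sym_bd {a b c η p q : ℝ} (hp : 0 < p) (hq : 0 < q)
    (ha : a ∈ Icc (0:ℝ) 1) (hb : b ∈ Icc (0:ℝ) 1)
    (hc : (p + q) * c = p * a + q * b) (hη : 0 ≤ η) :
    (a - b) / Real.sqrt (c + η) ≤ ((p + q) / p) * Real.sqrt (1 + η) := by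
  have hc1 : c ≤ 1 := by nlinarith [ha.2, hb.2]
  have hc0 : 0 ≤ c := by nlinarith [ha.1, hb.1]
  rcases (Real.sqrt_nonneg (c + η)).eq_or_lt with h | h
  · rw [← h, div_zero]; positivity
  · rw [div_le_iff₀ h]
    have h2 : Real.sqrt (c + η) ≤ Real.sqrt (1 + η) := Real.sqrt_le_sqrt (by linarith)
    have h3 : (Real.sqrt (c + η)) ^ 2 = c + η := Real.sq_sqrt (by linarith)
    have key : a ≤ ((p + q) / p) * (c + η) := by
      rw [div_mul_eq_mul_div, le_div_iff₀ hp]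
      nlinarith [hb.1]
    have hpq : 0 < (p + q) / p := by positivity
    have h4 : Real.sqrt (c + η) * Real.sqrt (c + η) ≤ Real.sqrt (c + η) * Real.sqrt (1 + η) :=
      mul_le_mul_of_nonneg_left h2 h.le
    nlinarith [mul_le_mul_of_nonneg_left h4 hpq.le, hb.1, ha.1]

lemma mean_mem {m : ℕ} (hm : 0 < m) (f : Fin m → ℝ) (hf : ∀ i, f i ∈ Icc (0:ℝ) 1) :
    (1 / (m : ℝ)) * ∑ i, f i ∈ Icc (0:ℝ) 1 := by
  have h0 : 0 ≤ ∑ i, f i := Finset.sum_nonneg fun i _ => (hf i).1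
  have h1 : ∑ i, f i ≤ (m : ℝ) := by
    calc ∑ i, f i ≤ ∑ _i : Fin m, (1:ℝ) := Finset.sum_le_sum fun i _ => (hf i).2
      _ = m := by simp
  have hm' : (0:ℝ) < m := Nat.cast_pos.mpr hm
  constructor
  · positivity
  · calc (1 / (m : ℝ)) * ∑ i, f i ≤ (1 / (m : ℝ)) * m :=
        mul_le_mul_of_nonneg_left h1 (by positivity)
      _ = 1 := by field_simp

lemma supSet_eq {α : Type*} {Λ : Type*} [Countable Λ] [Nonempty Λ]
    (g : Λ → α → ℝ) (M : ℝ) (hbd : ∀ lam x, g lam x ≤ M) (cc : ℝ) :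
    {x | cc ≤ ⨆ lam, g lam x} = ⋂ k : ℕ, ⋃ lam, {x | cc - 1 / (k + 1) < g lam x} := by
  ext x
  have hbdd : BddAbove (Set.range fun lam => g lam x) := ⟨M, by rintro y ⟨lam, rfl⟩; exact hbd lam x⟩
  simp only [mem_setOf_eq, mem_iInter, mem_iUnion]
  constructor
  · intro h k
    have hpos : (0:ℝ) < 1 / ((k:ℝ) + 1) := by positivity
    exact exists_lt_of_lt_ciSup (lt_of_lt_of_le (by linarith) h)
  · intro h
    by_contra hlt
    push_neg at hlt
    obtain ⟨k, hk⟩ := exists_nat_one_div_lt (sub_pos.mpr hlt)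
    obtain ⟨lam, hlam⟩ := h k
    have := le_ciSup hbdd lam
    linarith

lemma exists_eps {t η γ c : ℝ} (ht : 0 < t) (hη : 0 ≤ η) (hγ0 : 0 ≤ γ) (hγ1 : γ < 1)
    (hc : c < (1 - γ) * t) :
    ∃ ε : ℝ, 0 < ε ∧ ε < t ∧
      c ≤ (t - ε) - γ * t * Real.sqrt (kappaPlus t η / kappaPlus (t - ε) η) ∧
      0 ≤ (t - ε) - γ * t * Real.sqrt (kappaPlus t η / kappaPlus (t - ε) η) := by
  set φ : ℝ → ℝ := fun ε => (t - ε) - γ * t * Real.sqrt (kappaPlus t η / kappaPlus (t - ε) η)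
    with hφdef
  have hκ : kappaPlus t η ≠ 0 := (kappa_pos ht hη).ne'
  have hk : Continuous fun ε : ℝ => kappaPlus (t - ε) η := by
    unfold kappaPlus
    fun_prop
  have h2 : ContinuousAt (fun ε : ℝ => kappaPlus t η / kappaPlus (t - ε) η) 0 :=
    ContinuousAt.div continuousAt_const hk.continuousAt (by simpa using hκ)
  have hcont : ContinuousAt φ 0 := by
    apply ContinuousAt.sub
    · exact continuousAt_const.sub continuousAt_id
    · exact continuousAt_const.mul (Real.continuous_sqrt.continuousAt.comp h2)
  have hφ0 : φ 0 = (1 - γ) * t := by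
    simp only [hφdef, sub_zero]
    rw [div_self hκ, Real.sqrt_one]
    ring
  have hmax : max c 0 < φ 0 := by
    rw [hφ0]
    exact max_lt hc (by nlinarith)
  have hev : ∀ᶠ ε in nhds (0:ℝ), max c 0 < φ ε := hcont.eventually_const_lt hmax
  have hev2 : ∀ᶠ ε in nhds (0:ℝ), ε < t := eventually_lt_nhds ht
  have hself : ∀ᶠ ε in nhdsWithin (0:ℝ) (Set.Ioi 0), ε ∈ Set.Ioi (0:ℝ) := self_mem_nhdsWithin
  obtain ⟨ε, ⟨h1, h2'⟩, h3⟩ :=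
    (((hev.and hev2).filter_mono nhdsWithin_le_nhds).and hself).exists
  exact ⟨ε, h3, h2', le_of_lt (lt_of_le_of_lt (le_max_left _ _) h1),
    le_of_lt (lt_of_le_of_lt (le_max_right _ _) h1)⟩

end SymmAux

open SymmAux

/-- symmetrization (ghost sample) step of the self-normalized uniform
concentration bound: the probability of the symmetrized event lower-bounds the
product of the probability of the original event and the infimum over `λ` of the
probability that the ghost empirical mean is not too large. -/
theorem symmetrization_step
    {Ω : Type*} [MeasurableSpace Ω] (μ : Measure Ω) [IsProbabilityMeasure μ]
    {𝒵 : Type*} [MeasurableSpace 𝒵]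
    {Λ : Type*} [Countable Λ]
    (S : Λ → 𝒵 → ℝ) (hSmeas : ∀ lam, Measurable (S lam))
    (hSbdd : ∀ lam z, S lam z ∈ Set.Icc (0 : ℝ) 1)
    {n n' : ℕ} (hn : 0 < n) (hn' : 0 < n')
    (Z : Fin (n + n') → Ω → 𝒵) (hZmeas : ∀ i, Measurable (Z i))
    (hindep : iIndepFun Z μ)
    (ν : Measure 𝒵) [IsProbabilityMeasure ν]
    (hdist : ∀ i, Measure.map (Z i) μ = ν)
    (shatn : Λ → Ω → ℝ)
    (hshatn : ∀ lam ω, shatn lam ω =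
      (1 / (n : ℝ)) * ∑ i : Fin n, S lam (Z (Fin.castAdd n' i) ω))
    (shatn' : Λ → Ω → ℝ)
    (hshatn' : ∀ lam ω, shatn' lam ω =
      (1 / (n' : ℝ)) * ∑ i : Fin n', S lam (Z (Fin.natAdd n i) ω))
    (shatnn' : Λ → Ω → ℝ)
    (hshatnn' : ∀ lam ω, shatnn' lam ω =
      (1 / ((n : ℝ) + (n' : ℝ))) * ∑ i : Fin (n + n'), S lam (Z i ω))
    (s : Λ → ℝ) (hs : ∀ lam, s lam = ∫ z, S lam z ∂ν)
    (η t γ : ℝ) (hη : 0 ≤ η) (ht : 0 < t) (hγ : γ ∈ Set.Ioo (0 : ℝ) 1) :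
    μ {ω | t ≤ ⨆ lam : Λ, (shatn lam ω - s lam) / Real.sqrt (shatn lam ω + η)} *
        ⨅ lam : Λ,
          μ {ω | (shatn' lam ω - s lam) / Real.sqrt (s lam + kappaPlus t η) ≤ γ * t}
      ≤ μ {ω | (1 - γ) * t ≤
          ⨆ lam : Λ, (shatn lam ω - shatn' lam ω) / Real.sqrt (shatnn' lam ω + η)} := by
  classical
  obtain ⟨hγ0, hγ1⟩ := hγ
  have hsnn : ∀ lam, 0 ≤ s lam := fun lam => by
    rw [hs]; exact integral_nonneg fun z => (hSbdd lam z).1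
  have hnR : (0:ℝ) < n := Nat.cast_pos.mpr hn
  have hn'R : (0:ℝ) < n' := Nat.cast_pos.mpr hn'
  rcases isEmpty_or_nonempty Λ with hΛ | hΛ
  · have hempty : {ω | t ≤ ⨆ lam : Λ,
        (shatn lam ω - s lam) / Real.sqrt (shatn lam ω + η)} = (∅ : Set Ω) := by
      ext ω
      simp only [Set.mem_setOf_eq, Set.mem_empty_iff_false, iff_false, not_le,
        Real.iSup_of_isEmpty]
      exact ht
    rw [hempty, measure_empty, zero_mul]
    positivity
  obtain ⟨ι, hι⟩ := Countable.exists_injective_nat Λ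
  -- the two blocks
  set Sblk : Finset (Fin (n + n')) := Finset.univ.filter (fun i => (i : ℕ) < n) with hSblk
  set Tblk : Finset (Fin (n + n')) := Finset.univ.filter (fun i => ¬ (i : ℕ) < n) with hTblk
  have hdisjST : Disjoint Sblk Tblk := by
    rw [Finset.disjoint_left]
    intro i hi hi'
    simp only [hSblk, hTblk, Finset.mem_filter] at hi hi'
    exact hi'.2 hi.2
  have hbase : IndepFun (fun ω (i : Sblk) => Z i ω) (fun ω (i : Tblk) => Z i ω) μ :=
    hindep.indepFun_finset Sblk Tblk hdisjST hZmeas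
  set X : Ω → Fin n → 𝒵 := fun ω i => Z (Fin.castAdd n' i) ω with hXdef
  set Y : Ω → Fin n' → 𝒵 := fun ω j => Z (Fin.natAdd n j) ω with hYdef
  have hX : Measurable X := measurable_pi_lambda _ fun i => hZmeas _
  have hY : Measurable Y := measurable_pi_lambda _ fun j => hZmeas _
  have hmemS : ∀ i : Fin n, Fin.castAdd n' i ∈ Sblk := fun i => by
    simp only [hSblk, Finset.mem_filter, Finset.mem_univ, true_and, Fin.coe_castAdd]
    exact i.isLt
  have hmemT : ∀ j : Fin n', Fin.natAdd n j ∈ Tblk := fun j => by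
    simp only [hTblk, Finset.mem_filter, Finset.mem_univ, true_and, Fin.coe_natAdd, not_lt]
    exact Nat.le_add_right n j
  have hXY : IndepFun X Y μ := by
    have hcomp := hbase.comp
      (φ := fun v : (Sblk → 𝒵) => fun i : Fin n => v ⟨Fin.castAdd n' i, hmemS i⟩)
      (ψ := fun v : (Tblk → 𝒵) => fun j : Fin n' => v ⟨Fin.natAdd n j, hmemT j⟩)
      (measurable_pi_lambda _ fun i => measurable_pi_apply _)
      (measurable_pi_lambda _ fun j => measurable_pi_apply _)
    exact hcomp
  -- empirical functionals on product spaces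
  set empX : Λ → (Fin n → 𝒵) → ℝ := fun lam x => (1 / (n : ℝ)) * ∑ i, S lam (x i) with hempX
  set empY : Λ → (Fin n' → 𝒵) → ℝ := fun lam y => (1 / (n' : ℝ)) * ∑ j, S lam (y j) with hempY
  have hempX_meas : ∀ lam, Measurable (empX lam) := fun lam =>
    (Finset.measurable_sum _ fun i _ => (hSmeas lam).comp (measurable_pi_apply i)).const_mul _
  have hempY_meas : ∀ lam, Measurable (empY lam) := fun lam =>
    (Finset.measurable_sum _ fun j _ => (hSmeas lam).comp (measurable_pi_apply j)).const_mul _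
  have hempX_mem : ∀ lam x, empX lam x ∈ Set.Icc (0:ℝ) 1 := fun lam x =>
    mean_mem hn _ fun i => hSbdd lam _
  have hempY_mem : ∀ lam y, empY lam y ∈ Set.Icc (0:ℝ) 1 := fun lam y =>
    mean_mem hn' _ fun j => hSbdd lam _
  set F : Λ → (Fin n → 𝒵) → ℝ :=
    fun lam x => (empX lam x - s lam) / Real.sqrt (empX lam x + η) with hF
  have hF_meas : ∀ lam, Measurable (F lam) := fun lam =>
    ((hempX_meas lam).sub measurable_const).div
      (((hempX_meas lam).add measurable_const).sqrt)
  have hshatnX : ∀ lam ω, shatn lam ω = empX lam (X ω) := fun lam ω => hshatn lam ω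
  have hshatn'Y : ∀ lam ω, shatn' lam ω = empY lam (Y ω) := fun lam ω => hshatn' lam ω
  have hnn'dec : ∀ lam ω, ((n : ℝ) + n') * shatnn' lam ω
      = (n : ℝ) * shatn lam ω + (n' : ℝ) * shatn' lam ω := by
    intro lam ω
    rw [hshatnn', hshatn, hshatn', Fin.sum_univ_add]
    field_simp
  -- event sets
  set Aset : Set (Fin n → 𝒵) := {x | t ≤ ⨆ lam, F lam x} with hAset
  have hFbd : ∀ lam x, F lam x ≤ Real.sqrt (1 + η) := fun lam x =>
    ratio_bd (hempX_mem lam x) (hsnn lam) hη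
  have hAmeas : MeasurableSet Aset := by
    rw [hAset, supSet_eq F _ hFbd t]
    exact MeasurableSet.iInter fun k => MeasurableSet.iUnion fun lam =>
      measurableSet_lt measurable_const (hF_meas lam)
  have hAeq : {ω | t ≤ ⨆ lam : Λ,
      (shatn lam ω - s lam) / Real.sqrt (shatn lam ω + η)} = X ⁻¹' Aset := by
    ext ω
    simp only [Set.mem_setOf_eq, Set.mem_preimage, hAset]
    have : (⨆ lam : Λ, (shatn lam ω - s lam) / Real.sqrt (shatn lam ω + η))
        = ⨆ lam : Λ, F lam (X ω) := iSup_congr fun lam => by rw [hshatnX lam ω]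
    rw [this]
  set Hset : Λ → Set (Fin n' → 𝒵) := fun lam =>
    {y | (empY lam y - s lam) / Real.sqrt (s lam + kappaPlus t η) ≤ γ * t} with hHset
  have hHmeas : ∀ lam, MeasurableSet (Hset lam) := fun lam =>
    measurableSet_le (((hempY_meas lam).sub measurable_const).div measurable_const)
      measurable_const
  have hGeq : ∀ lam, {ω | (shatn' lam ω - s lam) / Real.sqrt (s lam + kappaPlus t η) ≤ γ * t}
      = Y ⁻¹' Hset lam := fun lam => by
    ext ω
    simp only [Set.mem_setOf_eq, Set.mem_preimage, hHset]
    rw [hshatn'Y lam ω]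
  set q := ⨅ lam, μ (Y ⁻¹' Hset lam) with hq
  have hInfEq : (⨅ lam : Λ, μ {ω | (shatn' lam ω - s lam) /
      Real.sqrt (s lam + kappaPlus t η) ≤ γ * t}) = q :=
    iInf_congr fun lam => congrArg μ (hGeq lam)
  -- symmetrized ratio
  have hshatn_meas : ∀ lam, Measurable (shatn lam) := fun lam => by
    have : shatn lam = fun ω => empX lam (X ω) := funext fun ω => hshatnX lam ω
    rw [this]; exact (hempX_meas lam).comp hX
  have hshatn'_meas : ∀ lam, Measurable (shatn' lam) := fun lam => by
    have : shatn' lam = fun ω => empY lam (Y ω) := funext fun ω => hshatn'Y lam ω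
    rw [this]; exact (hempY_meas lam).comp hY
  have hshatnn'_meas : ∀ lam, Measurable (shatnn' lam) := fun lam => by
    have : shatnn' lam = fun ω =>
        (1 / ((n : ℝ) + n')) * ∑ i : Fin (n + n'), S lam (Z i ω) :=
      funext fun ω => hshatnn' lam ω
    rw [this]
    exact (Finset.measurable_sum _ fun i _ => (hSmeas lam).comp (hZmeas i)).const_mul _
  set G : Λ → Ω → ℝ := fun lam ω =>
    (shatn lam ω - shatn' lam ω) / Real.sqrt (shatnn' lam ω + η) with hG
  have hG_meas : ∀ lam, Measurable (G lam) := fun lam =>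
    ((hshatn_meas lam).sub (hshatn'_meas lam)).div
      (((hshatnn'_meas lam).add measurable_const).sqrt)
  have hshatn_mem : ∀ lam ω, shatn lam ω ∈ Set.Icc (0:ℝ) 1 := fun lam ω => by
    rw [hshatnX]; exact hempX_mem lam _
  have hshatn'_mem : ∀ lam ω, shatn' lam ω ∈ Set.Icc (0:ℝ) 1 := fun lam ω => by
    rw [hshatn'Y]; exact hempY_mem lam _
  have hGbd : ∀ lam ω, G lam ω ≤ (((n : ℝ) + n') / n) * Real.sqrt (1 + η) := fun lam ω =>
    sym_bd hnR hn'R (hshatn_mem lam ω) (hshatn'_mem lam ω) (hnn'dec lam ω) hη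
  set E : ℕ → Set Ω := fun m => {ω | (1 - γ) * t - 1 / (m + 1) ≤ ⨆ lam, G lam ω} with hE
  have hEmeas : ∀ m, MeasurableSet (E m) := fun m => by
    rw [hE]
    show MeasurableSet {ω | (1 - γ) * t - 1 / (m + 1) ≤ ⨆ lam, G lam ω}
    rw [supSet_eq G _ hGbd ((1 - γ) * t - 1 / (m + 1))]
    exact MeasurableSet.iInter fun k => MeasurableSet.iUnion fun lam =>
      measurableSet_lt measurable_const (hG_meas lam)
  have hEanti : Antitone E := by
    intro m m' hmm' ω hω
    simp only [hE, Set.mem_setOf_eq] at hω ⊢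
    have h1 : 1 / ((m' : ℝ) + 1) ≤ 1 / ((m : ℝ) + 1) := by
      apply one_div_le_one_div_of_le (by positivity)
      exact_mod_cast by omega
    linarith
  have hEinter : ⋂ m, E m = {ω | (1 - γ) * t ≤ ⨆ lam, G lam ω} := by
    ext ω
    simp only [Set.mem_iInter, hE, Set.mem_setOf_eq]
    constructor
    · intro h
      by_contra hlt
      push_neg at hlt
      obtain ⟨k, hk⟩ := exists_nat_one_div_lt (sub_pos.mpr hlt)
      linarith [h k]
    · intro h m
      have : (0:ℝ) < 1 / ((m : ℝ) + 1) := by positivity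
      linarith
  have hTargetEq : {ω | (1 - γ) * t ≤
      ⨆ lam : Λ, (shatn lam ω - shatn' lam ω) / Real.sqrt (shatnn' lam ω + η)}
      = ⋂ m, E m := hEinter.symm
  rw [hAeq, hInfEq, hTargetEq,
    Directed.measure_iInter (fun m => (hEmeas m).nullMeasurableSet) hEanti.directed_ge
      ⟨0, measure_ne_top μ _⟩]
  refine le_iInf fun m => ?_
  -- choose ε
  have hcm : (1 - γ) * t - 1 / ((m : ℝ) + 1) < (1 - γ) * t := by
    have : (0:ℝ) < 1 / ((m : ℝ) + 1) := by positivity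
    linarith
  obtain ⟨ε, hε0, hεt, hφ1, hφ2⟩ := exists_eps ht hη hγ0.le hγ1 hcm
  set t' : ℝ := t - ε with ht'def
  have ht'0 : 0 < t' := by simp only [ht'def]; linarith
  have ht't : t' ≤ t := by simp only [ht'def]; linarith
  -- partition of Aset according to least witness
  set Cset : Λ → Set (Fin n → 𝒵) := fun lam =>
    {x | t' < F lam x} ∩ ⋂ lam', {x | ι lam' < ι lam → F lam' x ≤ t'} with hCset
  have hCmeas : ∀ lam, MeasurableSet (Cset lam) := fun lam => by
    apply (measurableSet_lt measurable_const (hF_meas lam)).inter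
    apply MeasurableSet.iInter
    intro lam'
    by_cases h : ι lam' < ι lam
    · have : {x | ι lam' < ι lam → F lam' x ≤ t'} = {x | F lam' x ≤ t'} := by
        ext x; simp [h]
      rw [this]
      exact measurableSet_le (hF_meas lam') measurable_const
    · have : {x | ι lam' < ι lam → F lam' x ≤ t'} = Set.univ := by
        ext x; simp [h]
      rw [this]
      exact MeasurableSet.univ
  have hCdisj : Pairwise (Function.onFun Disjoint fun lam => X ⁻¹' (Aset ∩ Cset lam)) := by
    intro l1 l2 hne
    rw [Function.onFun, Set.disjoint_left]
    intro ω h1 h2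
    simp only [Set.mem_preimage, Set.mem_inter_iff, hCset, Set.mem_setOf_eq,
      Set.mem_iInter] at h1 h2
    rcases lt_trichotomy (ι l1) (ι l2) with h | h | h
    · exact absurd h1.2.1 (not_lt.mpr (h2.2.2 l1 h))
    · exact hne (hι h)
    · exact absurd h2.2.1 (not_lt.mpr (h1.2.2 l2 h))
  have hcover : Aset ⊆ ⋃ lam, (Aset ∩ Cset lam) := by
    intro x hx
    have hxt : t ≤ ⨆ lam, F lam x := hx
    have hx' : t' < ⨆ lam, F lam x := lt_of_lt_of_le (by linarith) hxt
    obtain ⟨lam1, hlam1⟩ := exists_lt_of_lt_ciSup hx'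
    have hne : (ι '' {lam | t' < F lam x}).Nonempty := ⟨ι lam1, lam1, hlam1, rfl⟩
    obtain ⟨lam0, hlam0, hlam0eq⟩ := Nat.sInf_mem hne
    refine Set.mem_iUnion.mpr ⟨lam0, hx, ?_⟩
    refine ⟨hlam0, Set.mem_iInter.mpr fun lam' => ?_⟩
    intro hlt
    by_contra hgt
    push_neg at hgt
    have hle : sInf (ι '' {lam | t' < F lam x}) ≤ ι lam' :=
      Nat.sInf_le ⟨lam', hgt, rfl⟩
    rw [hlam0eq] at hlt
    omega
  -- final inclusion
  have hfinal : (⋃ lam, X ⁻¹' (Aset ∩ Cset lam) ∩ Y ⁻¹' Hset lam) ⊆ E m := by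
    rintro ω hω
    obtain ⟨lam, hωlam⟩ := Set.mem_iUnion.mp hω
    obtain ⟨hωX, hωY⟩ := hωlam
    simp only [Set.mem_preimage, Set.mem_inter_iff, hCset, Set.mem_setOf_eq] at hωX hωY
    have hC1 : t' < F lam (X ω) := hωX.2.1
    have h1 : t' ≤ (shatn lam ω - s lam) / Real.sqrt (shatn lam ω + η) := by
      rw [hshatnX lam ω]; exact hC1.le
    have h2 : (shatn' lam ω - s lam) / Real.sqrt (s lam + kappaPlus t η) ≤ γ * t := by
      rw [hshatn'Y lam ω]; exact hωY
    have hdet := det hnR hn'R (hshatn_mem lam ω).1 (hshatn'_mem lam ω).1 (hsnn lam) hη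
      ht'0 ht't hγ0.le (hnn'dec lam ω) h1 h2 hφ2
    have hGlam : t' - γ * t * Real.sqrt (kappaPlus t η / kappaPlus t' η) ≤ G lam ω := hdet
    have hbdd : BddAbove (Set.range fun lam => G lam ω) :=
      ⟨(((n : ℝ) + n') / n) * Real.sqrt (1 + η), by
        rintro y ⟨lam', rfl⟩; exact hGbd lam' ω⟩
    have hsup : G lam ω ≤ ⨆ lam', G lam' ω := le_ciSup hbdd lam
    show (1 - γ) * t - 1 / ((m : ℝ) + 1) ≤ ⨆ lam', G lam' ω
    linarith
  -- main chain
  have hAunion : X ⁻¹' Aset = ⋃ lam, X ⁻¹' (Aset ∩ Cset lam) := by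
    rw [← Set.preimage_iUnion]
    exact congrArg (X ⁻¹' ·) (Set.Subset.antisymm hcover
      (Set.iUnion_subset fun lam => Set.inter_subset_left))
  calc μ (X ⁻¹' Aset) * q
      = μ (⋃ lam, X ⁻¹' (Aset ∩ Cset lam)) * q := by rw [hAunion]
    _ = (∑' lam, μ (X ⁻¹' (Aset ∩ Cset lam))) * q := by
        rw [measure_iUnion hCdisj fun lam => hX (hAmeas.inter (hCmeas lam))]
    _ = ∑' lam, μ (X ⁻¹' (Aset ∩ Cset lam)) * q := ENNReal.tsum_mul_right.symm
    _ ≤ ∑' lam, μ (X ⁻¹' (Aset ∩ Cset lam)) * μ (Y ⁻¹' Hset lam) :=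
        ENNReal.tsum_le_tsum fun lam => mul_le_mul_right (iInf_le _ lam) _
    _ = ∑' lam, μ (X ⁻¹' (Aset ∩ Cset lam) ∩ Y ⁻¹' Hset lam) :=
        tsum_congr fun lam =>
          (hXY.measure_inter_preimage_eq_mul _ _ (hAmeas.inter (hCmeas lam))
            (hHmeas lam)).symm
    _ = μ (⋃ lam, X ⁻¹' (Aset ∩ Cset lam) ∩ Y ⁻¹' Hset lam) := by
        rw [measure_iUnion
          (hCdisj.mono fun l1 l2 h =>
            h.mono Set.inter_subset_left Set.inter_subset_left)
          fun lam => (hX (hAmeas.inter (hCmeas lam))).inter (hY (hHmeas lam))]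
    _ ≤ μ (E m) := measure_mono hfinal
end

section
/- Consider the integer lattice with nodes (a,b) for integers a, b ≥ 1, and assign to each rightward step from (a,b) to (a,b+1) the weight b/(a+b), and to each upward step from (a,b) to (a+1,b) the weight a/(a+b). For any node (i,j) with i, j ≥ 1 and i + j ≥ 3, the sum over all monotone lattice paths from (1,1) to (i,j) (paths in which each step increases exactly one coordinate by 1) of the product of the weights of the steps along the path equals 1/(i + j − 1). (The same identity, interpreted via the empty path with product 1, holds trivially when (i,j) = (1,1) is excluded; for i+j = 2 other than the root there are no such nodes.) -/
/-- The weight of a monotone lattice path starting at `(1,1)`, encoded by its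
sequence of step choices `c : Fin L → Bool` (`true` = rightward step, which
increases the second coordinate; `false` = upward step, which increases the
first coordinate).  At step `k` the current node is `(a,b)` with
`a = 1 + #{i < k : c i = false}` and `b = 1 + #{i < k : c i = true}`; a rightward
step from `(a,b)` has weight `b/(a+b)` and an upward step has weight `a/(a+b)`. -/
noncomputable def pathWeight (L : ℕ) (c : Fin L → Bool) : ℝ :=
  ∏ k : Fin L,
    (let a : ℝ := 1 + ((Finset.univ.filter fun i : Fin L => i < k ∧ c i = false).card : ℝ)
     let b : ℝ := 1 + ((Finset.univ.filter fun i : Fin L => i < k ∧ c i = true).card : ℝ)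
     if c k then b / (a + b) else a / (a + b))


open Finset

lemma filter_lt_card_eq (L : ℕ) (m : Fin (L+1)) (p : Fin (L+1) → Prop) [DecidablePred p] :
    (univ.filter fun i : Fin (L+1) => i < m ∧ p i).card
      = (univ.filter fun i : Fin L => Fin.castSucc i < m ∧ p (Fin.castSucc i)).card := by
  rw [← Finset.card_image_of_injective _ (Fin.castSucc_injective L)]
  congr 1
  ext i
  simp only [Finset.mem_image, Finset.mem_filter, Finset.mem_univ, true_and]
  constructor
  · rintro ⟨hi, hp⟩
    have hiL : i.val < L := lt_of_lt_of_le hi (Nat.lt_succ_iff.mp m.isLt)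
    have he : Fin.castSucc (⟨i.val, hiL⟩ : Fin L) = i := by ext; rfl
    refine ⟨⟨i.val, hiL⟩, ⟨?_, ?_⟩, he⟩
    · rw [he]; exact hi
    · rw [he]; exact hp
  · rintro ⟨k, ⟨hk, hp⟩, rfl⟩
    exact ⟨hk, hp⟩

lemma pathWeight_eq (L : ℕ) (c : Fin L → Bool) :
    pathWeight L c =
      (Nat.factorial ((univ.filter fun k => c k = true).card) : ℝ) *
        (Nat.factorial (L - (univ.filter fun k => c k = true).card) : ℝ) /
        (Nat.factorial (L+1) : ℝ) := by
  induction L with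
  | zero => simp [pathWeight, Nat.factorial]
  | succ L ih =>
    set T := (univ.filter fun i : Fin L => c (Fin.castSucc i) = true).card with hTdef
    have hT : T ≤ L := le_trans (Finset.card_filter_le _ _) (by simp)
    have hFT : (univ.filter fun i : Fin L => c (Fin.castSucc i) = false).card + T = L := by
      have h0 := Finset.card_filter_add_card_filter_not
        (s := (univ : Finset (Fin L))) (p := fun i => c (Fin.castSucc i) = false)
      have h' : (univ.filter fun a : Fin L => ¬ c (Fin.castSucc a) = false)
          = univ.filter fun a : Fin L => c (Fin.castSucc a) = true := by
        ext a; simp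
      rw [h', Finset.card_univ, Fintype.card_fin] at h0
      exact h0
    have htc : (univ.filter fun k : Fin (L+1) => c k = true).card
        = T + (if c (Fin.last L) = true then 1 else 0) := by
      rw [Finset.card_filter, Fin.sum_univ_castSucc, ← Finset.card_filter]
    have hTl : (univ.filter fun i : Fin (L+1) => i < Fin.last L ∧ c i = true).card = T := by
      rw [filter_lt_card_eq]
      congr 1; ext i; simp [Fin.castSucc_lt_last]
    have hFl : (univ.filter fun i : Fin (L+1) => i < Fin.last L ∧ c i = false).card
        = L - T := by
      rw [filter_lt_card_eq]
      have h' : (univ.filter fun i : Fin L => Fin.castSucc i < Fin.last L ∧ c (Fin.castSucc i) = false)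
          = (univ.filter fun i : Fin L => c (Fin.castSucc i) = false) := by
        ext i; simp [Fin.castSucc_lt_last]
      rw [h']; omega
    have hpre : ∀ k : Fin L, ∀ b : Bool,
        (univ.filter fun i : Fin (L+1) => i < Fin.castSucc k ∧ c i = b).card
          = (univ.filter fun i : Fin L => i < k ∧ c (Fin.castSucc i) = b).card := by
      intro k b
      rw [filter_lt_card_eq]
      have h' : (univ.filter fun i : Fin L => Fin.castSucc i < Fin.castSucc k ∧ c (Fin.castSucc i) = b)
          = univ.filter fun i : Fin L => i < k ∧ c (Fin.castSucc i) = b := by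
        ext i; simp [Fin.castSucc_lt_castSucc_iff]
      rw [h']
    rw [pathWeight, Fin.prod_univ_castSucc]
    have h1 : (∏ k : Fin L,
        (let a : ℝ := 1 + ((univ.filter fun i : Fin (L+1) => i < Fin.castSucc k ∧ c i = false).card : ℝ)
         let b : ℝ := 1 + ((univ.filter fun i : Fin (L+1) => i < Fin.castSucc k ∧ c i = true).card : ℝ)
         if c (Fin.castSucc k) then b / (a + b) else a / (a + b)))
        = pathWeight L (fun i => c (Fin.castSucc i)) := by
      rw [pathWeight]
      refine Finset.prod_congr rfl fun k _ => ?_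
      simp only [hpre]
    rw [h1, ih, htc, hTl, hFl, ← hTdef]
    have hcast : ((L - T : ℕ) : ℝ) = (L : ℝ) - (T : ℝ) := by
      push_cast [Nat.cast_sub hT]; ring
    have hneL : (Nat.factorial (L+1) : ℝ) ≠ 0 := by positivity
    cases hc : c (Fin.last L) with
    | true =>
      simp only [hc, reduceIte]
      have h2 : L + 1 - (T + 1) = L - T := by omega
      rw [h2]
      have hfT : (Nat.factorial (T+1) : ℝ) = ((T:ℝ)+1) * Nat.factorial T := by
        rw [Nat.factorial_succ]; push_cast; ring
      have hfL : (Nat.factorial (L+1+1) : ℝ) = ((L:ℝ)+2) * Nat.factorial (L+1) := by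
        rw [Nat.factorial_succ]; push_cast; ring
      rw [hfT, hfL, hcast]
      have hden : (1:ℝ) + ((L:ℝ) - (T:ℝ)) + (1 + (T:ℝ)) = (L:ℝ) + 2 := by ring
      rw [hden]
      have hL2 : ((L:ℝ) + 2) ≠ 0 := by positivity
      field_simp
      ring
    | false =>
      simp only [hc, Bool.false_eq_true, if_false, Nat.add_zero]
      have h2 : L + 1 - T = (L - T) + 1 := by omega
      rw [h2]
      have hfF : (Nat.factorial ((L-T)+1) : ℝ) = ((L:ℝ) - T + 1) * Nat.factorial (L-T) := by
        rw [Nat.factorial_succ]; push_cast [Nat.cast_sub hT]; ring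
      have hfL : (Nat.factorial (L+1+1) : ℝ) = ((L:ℝ)+2) * Nat.factorial (L+1) := by
        rw [Nat.factorial_succ]; push_cast; ring
      rw [hfF, hfL, hcast]
      have hden : (1:ℝ) + ((L:ℝ) - (T:ℝ)) + (1 + (T:ℝ)) = (L:ℝ) + 2 := by ring
      rw [hden]
      have hL2 : ((L:ℝ) + 2) ≠ 0 := by positivity
      field_simp
      ring

lemma card_paths (L t : ℕ) :
    (univ.filter fun c : Fin L → Bool =>
      (univ.filter fun k => c k = true).card = t).card = L.choose t := by
  have h := Finset.card_bij
    (i := fun (c : Fin L → Bool) (_ : c ∈ univ.filter fun c : Fin L → Bool =>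
        (univ.filter fun k => c k = true).card = t) => univ.filter fun k => c k = true)
    (s := univ.filter fun c : Fin L → Bool => (univ.filter fun k => c k = true).card = t)
    (t := Finset.powersetCard t (univ : Finset (Fin L)))
    (fun c hc => by
      rw [Finset.mem_powersetCard]
      exact ⟨Finset.subset_univ _, (Finset.mem_filter.mp hc).2⟩)
    (fun c1 h1 c2 h2 he => by
      funext k
      have he' : (univ.filter fun k => c1 k = true) = univ.filter fun k => c2 k = true := he
      have : (k ∈ univ.filter fun k => c1 k = true) ↔ (k ∈ univ.filter fun k => c2 k = true) := by
        rw [he']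
      simp only [Finset.mem_filter, Finset.mem_univ, true_and] at this
      rw [Bool.eq_iff_iff]
      exact this)
    (fun s hs => by
      rw [Finset.mem_powersetCard] at hs
      refine ⟨fun k => decide (k ∈ s), ?_, ?_⟩
      · rw [Finset.mem_filter]
        refine ⟨Finset.mem_univ _, ?_⟩
        rw [show (univ.filter fun k => decide (k ∈ s) = true) = s by ext k; simp]
        exact hs.2
      · ext k; simp)
  rw [h, Finset.card_powersetCard, Finset.card_univ, Fintype.card_fin]

/-- balanced inflow for the Hamming graph.  For any node `(i,j)` with
`i, j ≥ 1` and `i + j ≥ 3`, the sum over all monotone lattice paths from `(1,1)` to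
`(i,j)` (encoded as step sequences of length `L = i + j − 2` with exactly `j − 1`
rightward steps) of the product of the step weights equals `1/(i + j − 1)`. -/
theorem hamming_graph_balanced_inflow
    (i j : ℕ) (hi : 1 ≤ i) (hj : 1 ≤ j) (hij : 3 ≤ i + j) :
    ∑ c ∈ Finset.univ.filter
        (fun c : Fin (i + j - 2) → Bool =>
          (Finset.univ.filter fun k => c k = true).card = j - 1),
      pathWeight (i + j - 2) c
      = 1 / ((i : ℝ) + (j : ℝ) - 1) := by
  set L := i + j - 2 with hL
  set t := j - 1 with ht
  have htL : t ≤ L := by omega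
  have hsum : ∑ c ∈ Finset.univ.filter
        (fun c : Fin L → Bool => (Finset.univ.filter fun k => c k = true).card = t),
      pathWeight L c
      = (L.choose t : ℝ) *
          ((Nat.factorial t : ℝ) * (Nat.factorial (L - t) : ℝ) / (Nat.factorial (L+1) : ℝ)) := by
    rw [Finset.sum_congr rfl (fun c hc => ?_), Finset.sum_const, card_paths, nsmul_eq_mul]
    rw [pathWeight_eq, (Finset.mem_filter.mp hc).2]
  rw [hsum]
  have hch : (L.choose t : ℝ) * ((Nat.factorial t : ℝ) * (Nat.factorial (L - t) : ℝ))
      = (Nat.factorial L : ℝ) := by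
    rw [← Nat.cast_mul, ← Nat.cast_mul, ← mul_assoc]
    exact_mod_cast congrArg (Nat.cast (R := ℝ)) (Nat.choose_mul_factorial_mul_factorial htL)
  have hfL : (Nat.factorial (L+1) : ℝ) = ((L:ℝ)+1) * (Nat.factorial L : ℝ) := by
    rw [Nat.factorial_succ]; push_cast; ring
  have hLc : (L:ℝ) = (i:ℝ) + (j:ℝ) - 2 := by
    rw [hL, Nat.cast_sub (by omega : 2 ≤ i + j)]; push_cast; ring
  have hne : (Nat.factorial L : ℝ) ≠ 0 := by positivity
  have hne1 : ((i:ℝ) + (j:ℝ) - 1) ≠ 0 := by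
    have : (3:ℝ) ≤ (i:ℝ) + (j:ℝ) := by exact_mod_cast hij
    nlinarith
  rw [hfL, hLc, ← mul_div_assoc, hch,
    show (i:ℝ)+(j:ℝ)-2+1 = (i:ℝ)+(j:ℝ)-1 from by ring]
  rw [div_eq_div_iff (by positivity) (by
    intro h
    exact hne1 (by nlinarith))]
  ring
end
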